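/- arXiv:1112.1923 — 9 statements merged into one kernel-verified Lean document; each statement's English description precedes it below -/
import Mathlib

section
/- For every graph H and every integer n ≥ |V(H)|, the induced saturation number satisfies indsat(n, H) ≤ sat(n, H), where sat(n, H) is the (classical) saturation number of H. -/
open SimpleGraph

/-- A trigraph: the pairs of distinct vertices are partitioned into black edges,
gray edges, and (implicitly) white edges. -/
structure Trigraph (V : Type*) where
  /-- the graph of black edges -/
  black : SimpleGraph V
  /-- the graph of gray edges -/
  gray : SimpleGraph V
  /-- no pair is simultaneously black and gray -/
  disjoint : ∀ u v : V, ¬ (black.Adj u v ∧ gray.Adj u v)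

namespace Trigraph

variable {V : Type*} {W : Type*}

/-- `u v` is a white edge of `T`: the vertices are distinct and joined by neither a
black edge nor a gray edge. -/
def White (T : Trigraph V) (u v : V) : Prop :=
  u ≠ v ∧ ¬ T.black.Adj u v ∧ ¬ T.gray.Adj u v

/-- A realization of a trigraph is a graph containing every black edge and contained
in the union of the black and gray edges. -/
def IsRealization (T : Trigraph V) (R : SimpleGraph V) : Prop :=
  T.black ≤ R ∧ R ≤ T.black ⊔ T.gray

/-- The graph with the single edge `uv` (empty if `u = v`). -/
def single (u v : V) : SimpleGraph V := SimpleGraph.fromEdgeSet {s(u, v)}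

/-- The trigraph obtained from `T` by recoloring the pair `uv` gray. -/
def flip (T : Trigraph V) (u v : V) : Trigraph V where
  black := T.black \ single u v
  gray := T.gray ⊔ single u v
  disjoint := by
    intro a b h
    have := T.disjoint a b
    simp only [SimpleGraph.sdiff_adj, SimpleGraph.sup_adj] at h
    tauto

/-- `G` contains an induced copy of `H`. -/
def HasInducedCopy (H : SimpleGraph W) (G : SimpleGraph V) : Prop :=
  Nonempty (H ↪g G)

/-- A trigraph `T` is `H`-induced-saturated if no realization of `T` contains an
induced copy of `H`, but whenever any black or white edge of `T` is recolored gray,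
some realization of the resulting trigraph contains an induced copy of `H`. -/
def IsIndSat (H : SimpleGraph W) (T : Trigraph V) : Prop :=
  (∀ R : SimpleGraph V, T.IsRealization R → ¬ HasInducedCopy H R) ∧
  (∀ u v : V, u ≠ v → ¬ T.gray.Adj u v →
    ∃ R : SimpleGraph V, (T.flip u v).IsRealization R ∧ HasInducedCopy H R)

/-- The induced saturation number: the least number of gray edges in an
`H`-induced-saturated trigraph on `n` vertices (`⊤` if none exists). -/
noncomputable def indsat (n : ℕ) (H : SimpleGraph W) : ℕ∞ :=
  sInf {k : ℕ∞ | ∃ T : Trigraph (Fin n), IsIndSat H T ∧ (T.gray.edgeSet.ncard : ℕ∞) = k}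

/-- `G` contains a (not necessarily induced) copy of `H` as a subgraph. -/
def HasSubCopy (H : SimpleGraph W) (G : SimpleGraph V) : Prop :=
  ∃ f : W → V, Function.Injective f ∧ ∀ a b : W, H.Adj a b → G.Adj (f a) (f b)

/-- A graph `G` is `H`-saturated if it contains no copy of `H` but adding any new
edge creates a copy of `H`. -/
def IsSat (H : SimpleGraph W) (G : SimpleGraph V) : Prop :=
  ¬ HasSubCopy H G ∧
  ∀ u v : V, u ≠ v → ¬ G.Adj u v → HasSubCopy H (G ⊔ single u v)

/-- The saturation number: the least number of edges of an `H`-saturated graph on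
`n` vertices (`⊤` if none exists). -/
noncomputable def satNum (n : ℕ) (H : SimpleGraph W) : ℕ∞ :=
  sInf {k : ℕ∞ | ∃ G : SimpleGraph (Fin n), IsSat H G ∧ (G.edgeSet.ncard : ℕ∞) = k}

/-- The subtrigraph induced on a set of vertices. -/
def induce (s : Set V) (T : Trigraph V) : Trigraph s where
  black := T.black.induce s
  gray := T.gray.induce s
  disjoint := by
    intro a b h
    exact T.disjoint a b (by simpa using h)

/-- The complement trigraph: black and white edges are exchanged, gray edges are
unchanged. -/
def compl (T : Trigraph V) : Trigraph V where
  black := (T.black ⊔ T.gray)ᶜ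
  gray := T.gray
  disjoint := by
    intro a b h
    rcases h with ⟨hb, hg⟩
    rw [SimpleGraph.compl_adj] at hb
    exact hb.2 ((SimpleGraph.sup_adj _ _ _ _).mpr (Or.inr hg))

end Trigraph

/-- For every graph `H` and every `n ≥ |V(H)|`,
`indsat(n, H) ≤ sat(n, H)`. -/
theorem indsat_le_satNum {W : Type*} [Fintype W] (H : SimpleGraph W) (n : ℕ)
    (hn : Fintype.card W ≤ n) :
    Trigraph.indsat n H ≤ Trigraph.satNum n H := by
  apply sInf_le_sInf
  rintro k ⟨G, ⟨hGsat, hGadd⟩, hk⟩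
  refine ⟨⟨⊥, G, fun u v h => h.1.elim⟩, ⟨?_, ?_⟩, hk⟩
  · rintro R ⟨-, hR2⟩ ⟨φ⟩
    exact hGsat ⟨φ, φ.injective, fun a b hab =>
      (SimpleGraph.sup_adj _ _ _ _).mp (hR2 (φ.map_rel_iff.mpr hab)) |>.resolve_left
        (fun h => h.elim)⟩
  · intro u v huv hadj
    obtain ⟨f, hf, hmap⟩ := hGadd u v huv hadj
    refine ⟨H.map (⟨f, hf⟩ : W ↪ Fin n), ⟨?_, ?_⟩, ⟨SimpleGraph.Embedding.map ⟨f, hf⟩ H⟩⟩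
    · intro a b hab
      simp only [Trigraph.flip, SimpleGraph.sdiff_adj, SimpleGraph.bot_adj] at hab
      exact hab.1.elim
    · intro a b hab
      simp only [SimpleGraph.map_adj] at hab
      obtain ⟨x, y, hxy, rfl, rfl⟩ := hab
      simp only [Trigraph.flip, SimpleGraph.sup_adj, SimpleGraph.sdiff_adj]
      have := hmap x y hxy
      rw [SimpleGraph.sup_adj] at this
      tauto
end

section
/- For all integers n ≥ h ≥ 3, the induced saturation number of the complete graph K_h equals (h−2)·n − binom(h−1, 2); in particular indsat(n, K_h) = sat(n, K_h). -/
open SimpleGraph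

open Finset Matrix

lemma det_updateRow_sum' {m : Type*} [DecidableEq m] [Fintype m] {R : Type*} [CommRing R]
    (M : Matrix m m R) (r : m) {α : Type*} (s : Finset α) (c : α → R) (f : α → (m → R)) :
    (M.updateRow r (∑ a ∈ s, c a • f a)).det = ∑ a ∈ s, c a * (M.updateRow r (f a)).det := by
  classical
  induction s using Finset.induction_on with
  | empty =>
      rw [Finset.sum_empty, Finset.sum_empty]
      exact Matrix.det_eq_zero_of_row_eq_zero r (fun j => by simp)
  | @insert a s h ih =>
      rw [Finset.sum_insert h, Finset.sum_insert h, Matrix.det_updateRow_add,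
        Matrix.det_updateRow_smul, ih]

lemma updateRow_comm' {m n : Type*} [DecidableEq m] {R : Type*}
    (M : Matrix m n R) {r r' : m} (h : r ≠ r') (u v : n → R) :
    (M.updateRow r u).updateRow r' v = (M.updateRow r' v).updateRow r u := by
  ext i j
  rcases eq_or_ne i r with rfl | hi
  · rw [Matrix.updateRow_ne h, Matrix.updateRow_self, Matrix.updateRow_self]
  rcases eq_or_ne i r' with rfl | hi'
  · rw [Matrix.updateRow_self, Matrix.updateRow_ne (Ne.symm h), Matrix.updateRow_self]
  · rw [Matrix.updateRow_ne hi', Matrix.updateRow_ne hi, Matrix.updateRow_ne hi,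
      Matrix.updateRow_ne hi']

section Boll

variable (n h : ℕ)

/-- `d = n - h + 2`. -/
def dd : ℕ := n - h + 2

abbrev ρt := Fin 2 ⊕ Fin (n - h)

variable {n h}

noncomputable def eqv (hn : h ≤ n) : ρt n h ≃ Fin (dd n h) :=
  finSumFinEquiv.trans (finCongr (by unfold dd; omega))

variable (n h)

def wv (z : Fin n) : Fin (dd n h) → ℚ := fun m => (z : ℚ) ^ (m : ℕ)

def bas (k : Fin (dd n h)) : Fin (dd n h) → ℚ := fun m => if m = k then 1 else 0

variable {n h}

noncomputable def rmat (hn : h ≤ n) (g : Fin (n - h) → Fin n)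
    (u v : Fin (dd n h) → ℚ) : Matrix (ρt n h) (ρt n h) ℚ :=
  Matrix.of fun r c => Sum.elim ![u, v] (fun t => wv n h (g t)) r (eqv hn c)

lemma rmat_inl0 (hn : h ≤ n) (g : Fin (n - h) → Fin n) (u v : Fin (dd n h) → ℚ) (c : ρt n h) :
    rmat hn g u v (Sum.inl 0) c = u (eqv hn c) := rfl

lemma rmat_inl1 (hn : h ≤ n) (g : Fin (n - h) → Fin n) (u v : Fin (dd n h) → ℚ) (c : ρt n h) :
    rmat hn g u v (Sum.inl 1) c = v (eqv hn c) := rfl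

lemma rmat_inr (hn : h ≤ n) (g : Fin (n - h) → Fin n) (u v : Fin (dd n h) → ℚ)
    (t : Fin (n - h)) (c : ρt n h) :
    rmat hn g u v (Sum.inr t) c = ((g t : ℕ) : ℚ) ^ ((eqv hn c : Fin (dd n h)) : ℕ) := rfl

lemma rmat_eq_update (hn : h ≤ n) (g : Fin (n - h) → Fin n) (u v u' v' : Fin (dd n h) → ℚ) :
    rmat hn g u v =
      ((rmat hn g u' v').updateRow (Sum.inl 0) (fun c => u (eqv hn c))).updateRow
        (Sum.inl 1) (fun c => v (eqv hn c)) := by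
  ext r c
  rcases r with i | t
  · fin_cases i <;> simp only [Fin.zero_eta, Fin.mk_one, Fin.isValue, id_eq]
    · rw [Matrix.updateRow_ne (by simp), Matrix.updateRow_self]
      rfl
    · rw [Matrix.updateRow_self]
      rfl
  · rw [Matrix.updateRow_ne (by simp), Matrix.updateRow_ne (by simp)]
    rfl

lemma rmat_swap_det (hn : h ≤ n) (g : Fin (n - h) → Fin n) (u v : Fin (dd n h) → ℚ) :
    (rmat hn g v u).det = - (rmat hn g u v).det := by
  have hsw : rmat hn g v u =
      (rmat hn g u v).submatrix (Equiv.swap (Sum.inl 0) (Sum.inl 1) : Equiv.Perm (ρt n h)) id := by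
    ext r c
    rcases r with i | t
    · fin_cases i <;> simp only [Fin.zero_eta, Fin.mk_one, Fin.isValue, id_eq]
      · rw [Matrix.submatrix_apply]
        rw [show (Equiv.swap (Sum.inl 0) (Sum.inl 1) : Equiv.Perm (ρt n h)) (Sum.inl 0)
            = Sum.inl 1 from Equiv.swap_apply_left _ _]
        rfl
      · rw [Matrix.submatrix_apply]
        rw [show (Equiv.swap (Sum.inl 0) (Sum.inl 1) : Equiv.Perm (ρt n h)) (Sum.inl 1)
            = Sum.inl 0 from Equiv.swap_apply_right _ _]
        rfl
    · rw [Matrix.submatrix_apply]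
      rw [Equiv.swap_apply_of_ne_of_ne (by simp) (by simp)]
      rfl
  rw [hsw, Matrix.det_permute, Equiv.Perm.sign_swap (by simp)]
  push_cast
  ring

lemma rmat_expand (hn : h ≤ n) (g : Fin (n - h) → Fin n) (u v : Fin (dd n h) → ℚ) :
    (rmat hn g u v).det
      = ∑ l, v l * ∑ k, u k * (rmat hn g (bas n h k) (bas n h l)).det := by
  classical
  have hrow : ∀ w : Fin (dd n h) → ℚ,
      (fun c : ρt n h => w (eqv hn c)) = ∑ k, w k • (fun c => bas n h k (eqv hn c)) := by
    intro w
    funext c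
    simp [Finset.sum_apply, Pi.smul_apply, bas, smul_eq_mul, mul_ite, mul_one, mul_zero,
      Finset.sum_ite_eq]
  rw [rmat_eq_update hn g u v u v, hrow v, det_updateRow_sum']
  refine Finset.sum_congr rfl fun l _ => ?_
  congr 1
  rw [updateRow_comm' _ (by simp : (Sum.inl 0 : ρt n h) ≠ Sum.inl 1), hrow u,
    det_updateRow_sum']
  refine Finset.sum_congr rfl fun k _ => ?_
  congr 1
  rw [updateRow_comm' _ (by simp : (Sum.inl 1 : ρt n h) ≠ Sum.inl 0)]
  rw [← rmat_eq_update hn g (bas n h k) (bas n h l) u v]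

lemma det_rmat_w_ne_zero (hn : h ≤ n) (g : Fin (n - h) → Fin n) (a b : Fin n)
    (hinj : Function.Injective (Sum.elim ![a, b] g : ρt n h → Fin n)) :
    (rmat hn g (wv n h a) (wv n h b)).det ≠ 0 := by
  classical
  set vt : ρt n h → Fin n := Sum.elim ![a, b] g with hvt
  have hM : rmat hn g (wv n h a) (wv n h b) =
      Matrix.of (fun r c => ((vt r : ℕ) : ℚ) ^ ((eqv hn c : Fin (dd n h)) : ℕ)) := by
    ext r c
    rcases r with i | t
    · fin_cases i <;> rfl
    · rfl
  have hre : (Matrix.reindex (eqv hn) (eqv hn))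
        (Matrix.of (fun r c => ((vt r : ℕ) : ℚ) ^ ((eqv hn c : Fin (dd n h)) : ℕ)))
      = Matrix.vandermonde (fun r => ((vt ((eqv hn).symm r) : ℕ) : ℚ)) := by
    ext r c
    simp [Matrix.reindex_apply, Matrix.vandermonde]
  rw [hM, ← Matrix.det_reindex_self (eqv hn), hre, Matrix.det_vandermonde]
  refine Finset.prod_ne_zero_iff.mpr fun i _ => Finset.prod_ne_zero_iff.mpr fun j hj => ?_
  rw [sub_ne_zero]
  intro hc
  have hji : vt ((eqv hn).symm j) = vt ((eqv hn).symm i) := by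
    apply Fin.val_injective
    exact_mod_cast hc
  have hji2 : j = i := (eqv hn).symm.injective (hinj hji)
  exact (Finset.mem_Ioi.mp hj).ne' hji2

lemma fin_filter_val_lt (d m : ℕ) (hm : m ≤ d) :
    ((Finset.univ : Finset (Fin d)).filter (fun x : Fin d => (x : ℕ) < m)).card = m := by
  have hall : ∀ a ∈ Finset.range m, a < d := fun a ha => lt_of_lt_of_le (Finset.mem_range.mp ha) hm
  have : (Finset.univ : Finset (Fin d)).filter (fun x : Fin d => (x : ℕ) < m)
      = (Finset.range m).attachFin hall := by
    ext x
    simp [Finset.mem_attachFin, Finset.mem_range]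
  rw [this, Finset.card_attachFin, Finset.card_range]

lemma card_lt_pairs (d : ℕ) : Fintype.card {p : Fin d × Fin d // p.1 < p.2} = d.choose 2 := by
  classical
  rw [Fintype.card_subtype]
  rw [show (Finset.univ : Finset (Fin d × Fin d)) = Finset.univ ×ˢ Finset.univ from
    Finset.univ_product_univ.symm]
  rw [Finset.card_filter, Finset.sum_product]
  have hinner : ∀ k : Fin d, (∑ l : Fin d, if k < l then (1 : ℕ) else 0) = d - ((k : ℕ) + 1) := by
    intro k
    rw [← Finset.card_filter]
    have hset : (Finset.univ.filter fun l : Fin d => k < l)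
        = Finset.univ \ (Finset.univ.filter fun l : Fin d => (l : ℕ) < (k : ℕ) + 1) := by
      ext l
      simp only [Finset.mem_filter, Finset.mem_univ, true_and, Finset.mem_sdiff, not_lt,
        Fin.lt_def, Nat.lt_succ_iff]
      omega
    rw [hset, Finset.card_sdiff_of_subset (Finset.filter_subset _ _),
      fin_filter_val_lt d ((k : ℕ) + 1) k.isLt, Finset.card_univ, Fintype.card_fin]
  rw [Finset.sum_congr rfl (fun k _ => hinner k)]
  rw [Fin.sum_univ_eq_sum_range (fun j => d - (j + 1)) d]
  rw [Finset.sum_congr rfl (fun j hj => (by omega : d - (j + 1) = d - 1 - j))]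
  rw [Finset.sum_range_reflect (fun j => j) d, Finset.sum_range_id, Nat.choose_two_right]


lemma sum_elim_pair_inj {α β : Type*} (a b : α) (g : β → α) (hab : a ≠ b)
    (hg : Function.Injective g) (hga : ∀ k, g k ≠ a) (hgb : ∀ k, g k ≠ b) :
    Function.Injective (Sum.elim ![a, b] g) := by
  intro r r' hEq
  rcases r with i | t <;> rcases r' with i' | t'
  · congr 1
    fin_cases i <;> fin_cases i' <;>
      simp only [Fin.zero_eta, Fin.mk_one, Sum.elim_inl, Matrix.cons_val_zero,
        Matrix.cons_val_one, Matrix.head_cons] at hEq <;>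
      first
        | rfl
        | exact absurd hEq hab
        | exact absurd hEq.symm hab
  · exfalso
    fin_cases i <;>
      simp only [Fin.zero_eta, Fin.mk_one, Sum.elim_inl, Sum.elim_inr, Matrix.cons_val_zero,
        Matrix.cons_val_one, Matrix.head_cons] at hEq
    · exact hga t' hEq.symm
    · exact hgb t' hEq.symm
  · exfalso
    fin_cases i' <;>
      simp only [Fin.zero_eta, Fin.mk_one, Sum.elim_inl, Sum.elim_inr, Matrix.cons_val_zero,
        Matrix.cons_val_one, Matrix.head_cons] at hEq
    · exact hga t hEq
    · exact hgb t hEq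
  · exact congrArg Sum.inr (hg hEq)

lemma bollobas_abstract {n h : ℕ} (hn : h ≤ n) {ι : Type*} [Fintype ι]
    (x y : ι → Fin n) (C : ι → Fin (n - h) → Fin n)
    (hxy : ∀ i, x i ≠ y i)
    (hCne : ∀ i k, C i k ≠ x i ∧ C i k ≠ y i)
    (hCinj : ∀ j, Function.Injective (C j))
    (hcross : ∀ i j, i ≠ j → ∃ k, C j k = x i ∨ C j k = y i) :
    Fintype.card ι ≤ (dd n h).choose 2 := by
  classical
  have hDanti : ∀ j k l, (rmat hn (C j) (bas n h l) (bas n h k)).det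
      = - (rmat hn (C j) (bas n h k) (bas n h l)).det :=
    fun j k l => rmat_swap_det hn (C j) _ _
  have hDdiag : ∀ j k, (rmat hn (C j) (bas n h k) (bas n h k)).det = 0 := by
    intro j k
    have := hDanti j k k
    linarith
  have hAdiag : ∀ i, (rmat hn (C i) (wv n h (x i)) (wv n h (y i))).det ≠ 0 := by
    intro i
    apply det_rmat_w_ne_zero
    exact sum_elim_pair_inj (x i) (y i) (C i) (hxy i) (hCinj i)
      (fun k => (hCne i k).1) (fun k => (hCne i k).2)
  have hAoff : ∀ i j, i ≠ j →
      (rmat hn (C j) (wv n h (x i)) (wv n h (y i))).det = 0 := by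
    intro i j hij
    obtain ⟨k, hk⟩ := hcross i j hij
    rcases hk with hk | hk
    · refine Matrix.det_zero_of_row_eq (i := Sum.inl 0) (j := Sum.inr k) (by simp) ?_
      funext c
      rw [rmat_inl0, rmat_inr, hk]
      rfl
    · refine Matrix.det_zero_of_row_eq (i := Sum.inl 1) (j := Sum.inr k) (by simp) ?_
      funext c
      rw [rmat_inl1, rmat_inr, hk]
      rfl
  set d := dd n h with hd
  have hA : ∀ i j, (rmat hn (C j) (wv n h (x i)) (wv n h (y i))).det
      = ∑ p : {p : Fin d × Fin d // p.1 < p.2},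
          (wv n h (x i) p.1.1 * wv n h (y i) p.1.2
            - wv n h (y i) p.1.1 * wv n h (x i) p.1.2)
            * (rmat hn (C j) (bas n h p.1.1) (bas n h p.1.2)).det := by
    intro i j
    rw [rmat_expand hn (C j) (wv n h (x i)) (wv n h (y i))]
    rw [Finset.sum_congr rfl (fun l _ => Finset.mul_sum _ _ _)]
    rw [Finset.sum_comm]
    rw [show (∑ k : Fin d, ∑ l : Fin d, wv n h (y i) l * (wv n h (x i) k *
          (rmat hn (C j) (bas n h k) (bas n h l)).det))
        = ∑ p ∈ (Finset.univ ×ˢ Finset.univ : Finset (Fin d × Fin d)),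
            wv n h (x i) p.1 * wv n h (y i) p.2 *
              (rmat hn (C j) (bas n h p.1) (bas n h p.2)).det from by
      rw [Finset.sum_product]
      exact Finset.sum_congr rfl fun k _ => Finset.sum_congr rfl fun l _ => by ring]
    rw [← Finset.sum_filter_add_sum_filter_not
      (Finset.univ ×ˢ Finset.univ : Finset (Fin d × Fin d)) (fun p => p.1 < p.2)]
    have hgt : ∑ p ∈ (Finset.univ ×ˢ Finset.univ : Finset (Fin d × Fin d)).filter
          (fun p => ¬ p.1 < p.2),
        wv n h (x i) p.1 * wv n h (y i) p.2 *
          (rmat hn (C j) (bas n h p.1) (bas n h p.2)).det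
        = ∑ p ∈ (Finset.univ ×ˢ Finset.univ : Finset (Fin d × Fin d)).filter
          (fun p => p.2 < p.1),
        wv n h (x i) p.1 * wv n h (y i) p.2 *
          (rmat hn (C j) (bas n h p.1) (bas n h p.2)).det := by
      symm
      apply Finset.sum_subset
      · intro p hp
        simp only [Finset.mem_filter] at hp ⊢
        exact ⟨hp.1, not_lt.mpr (le_of_lt hp.2)⟩
      · intro p hp hnp
        simp only [Finset.mem_filter] at hp hnp
        have hpe : p.1 = p.2 := by
          rcases lt_trichotomy p.1 p.2 with hc | hc | hc
          · exact absurd hc hp.2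
          · exact hc
          · exact absurd hc (fun hcc => hnp ⟨hp.1, hcc⟩)
        rw [hpe, hDdiag, mul_zero]
    rw [hgt]
    have hswap : ∑ p ∈ (Finset.univ ×ˢ Finset.univ : Finset (Fin d × Fin d)).filter
          (fun p => p.2 < p.1),
        wv n h (x i) p.1 * wv n h (y i) p.2 *
          (rmat hn (C j) (bas n h p.1) (bas n h p.2)).det
        = ∑ p ∈ (Finset.univ ×ˢ Finset.univ : Finset (Fin d × Fin d)).filter
          (fun p => p.1 < p.2),
        - (wv n h (y i) p.1 * wv n h (x i) p.2 *
          (rmat hn (C j) (bas n h p.1) (bas n h p.2)).det) := by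
      apply Finset.sum_nbij' (fun p : Fin d × Fin d => (p.2, p.1))
        (fun p : Fin d × Fin d => (p.2, p.1))
      · intro p hp
        simp only [Finset.mem_filter, Finset.mem_product, Finset.mem_univ, true_and] at hp ⊢
        exact hp
      · intro p hp
        simp only [Finset.mem_filter, Finset.mem_product, Finset.mem_univ, true_and] at hp ⊢
        exact hp
      · intro p _
        rfl
      · intro p _
        rfl
      · intro p hp
        show wv n h (x i) p.1 * wv n h (y i) p.2 *
            (rmat hn (C j) (bas n h p.1) (bas n h p.2)).det
          = - (wv n h (y i) p.2 * wv n h (x i) p.1 *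
            (rmat hn (C j) (bas n h p.2) (bas n h p.1)).det)
        rw [hDanti]
        ring
    rw [hswap, ← Finset.sum_add_distrib]
    rw [Finset.sum_subtype (p := fun p : Fin d × Fin d => p.1 < p.2)
      ((Finset.univ ×ˢ Finset.univ :
        Finset (Fin d × Fin d)).filter (fun p => p.1 < p.2))
      (by intro p; simp [Finset.mem_filter]) (fun p : Fin d × Fin d =>
        wv n h (x i) p.1 * wv n h (y i) p.2 *
          (rmat hn (C j) (bas n h p.1) (bas n h p.2)).det
        + - (wv n h (y i) p.1 * wv n h (x i) p.2 *
          (rmat hn (C j) (bas n h p.1) (bas n h p.2)).det))]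
    exact Finset.sum_congr rfl fun p _ => by ring
  -- linear independence
  have li : LinearIndependent ℚ (fun i : ι =>
      (fun p : {p : Fin d × Fin d // p.1 < p.2} =>
        wv n h (x i) p.1.1 * wv n h (y i) p.1.2
          - wv n h (y i) p.1.1 * wv n h (x i) p.1.2 : {p : Fin d × Fin d // p.1 < p.2} → ℚ)) := by
    rw [Fintype.linearIndependent_iff]
    intro g hg i0
    have hgp : ∀ p : {p : Fin d × Fin d // p.1 < p.2},
        (∑ i, g i * (wv n h (x i) p.1.1 * wv n h (y i) p.1.2
          - wv n h (y i) p.1.1 * wv n h (x i) p.1.2)) = 0 := by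
      intro p
      have := congrFun hg p
      simpa [Finset.sum_apply] using this
    have h0 : ∑ p : {p : Fin d × Fin d // p.1 < p.2},
        (∑ i, g i * (wv n h (x i) p.1.1 * wv n h (y i) p.1.2
          - wv n h (y i) p.1.1 * wv n h (x i) p.1.2))
          * (rmat hn (C i0) (bas n h p.1.1) (bas n h p.1.2)).det = 0 :=
      Finset.sum_eq_zero fun p _ => by rw [hgp p, zero_mul]
    have h1 : ∑ p : {p : Fin d × Fin d // p.1 < p.2},
        (∑ i, g i * (wv n h (x i) p.1.1 * wv n h (y i) p.1.2
          - wv n h (y i) p.1.1 * wv n h (x i) p.1.2))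
          * (rmat hn (C i0) (bas n h p.1.1) (bas n h p.1.2)).det
        = ∑ i, g i * (rmat hn (C i0) (wv n h (x i)) (wv n h (y i))).det := by
      rw [Finset.sum_congr rfl (fun p _ => Finset.sum_mul _ _ _)]
      rw [Finset.sum_comm]
      refine Finset.sum_congr rfl fun i _ => ?_
      rw [hA i i0, Finset.mul_sum]
      exact Finset.sum_congr rfl fun p _ => by ring
    rw [h1] at h0
    rw [Finset.sum_eq_single i0 (fun b _ hb => by rw [hAoff b i0 hb, mul_zero])
      (fun hmem => absurd (Finset.mem_univ i0) hmem)] at h0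
    rcases mul_eq_zero.mp h0 with hcase | hcase
    · exact hcase
    · exact absurd hcase (hAdiag i0)
  have hcard := li.fintype_card_le_finrank
  rwa [Module.finrank_fintype_fun_eq_card, card_lt_pairs] at hcard

lemma two_mul_choose_two (a : ℕ) : 2 * a.choose 2 = a * (a - 1) := by
  cases a with
  | zero => simp
  | succ b =>
      rw [Nat.choose_two_right]
      simp only [Nat.add_sub_cancel]
      rw [Nat.mul_div_cancel']
      have : Even ((b + 1) * b) := by
        rw [mul_comm]
        exact Nat.even_mul_succ_self b
      exact this.two_dvd

lemma sat_count_arith (n h : ℕ) (hh : 3 ≤ h) (hn : h ≤ n) :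
    n.choose 2 = (n - h + 2).choose 2 + ((h - 2) * n - (h - 1).choose 2) := by
  obtain ⟨k, rfl⟩ : ∃ k, h = k + 3 := ⟨h - 3, by omega⟩
  obtain ⟨m, rfl⟩ : ∃ m, n = m + (k + 3) := ⟨n - (k + 3), by omega⟩
  rw [show m + (k + 3) - (k + 3) + 2 = m + 2 by omega, show k + 3 - 2 = k + 1 by omega,
    show k + 3 - 1 = k + 2 by omega]
  have hge : (k + 2).choose 2 ≤ (k + 1) * (m + (k + 3)) := by
    have h3 : 2 * (k + 2).choose 2 = (k + 2) * (k + 1) := by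
      rw [two_mul_choose_two]
      congr 1
    have h4 : (k + 2) * (k + 1) ≤ 2 * ((k + 1) * (m + (k + 3))) := by
      calc (k + 2) * (k + 1) = (k + 1) * (k + 2) := by ring
        _ ≤ (k + 1) * (2 * (m + (k + 3))) := by
            apply Nat.mul_le_mul_left
            omega
        _ = 2 * ((k + 1) * (m + (k + 3))) := by ring
    omega
  rw [← Nat.add_sub_assoc hge]
  apply Nat.eq_sub_of_add_eq
  apply Nat.eq_of_mul_eq_mul_left (show 0 < 2 by norm_num)
  rw [Nat.mul_add, Nat.mul_add, two_mul_choose_two, two_mul_choose_two, two_mul_choose_two]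
  rw [show m + (k + 3) - 1 = m + k + 2 by omega, show m + 2 - 1 = m + 1 by omega,
    show k + 2 - 1 = k + 1 by omega]
  ring

open Finset SimpleGraph

lemma sat_lower {n h : ℕ} (hh : 3 ≤ h) (hn : h ≤ n) (G : SimpleGraph (Fin n))
    (hsat : Trigraph.IsSat (⊤ : SimpleGraph (Fin h)) G) :
    (h - 2) * n - (h - 1).choose 2 ≤ G.edgeSet.ncard := by
  classical
  set NE := Gᶜ.edgeFinset with hNE
  have key : ∀ e ∈ NE, ∃ xx yy : Fin n, ∃ S : Finset (Fin n),
      e = s(xx, yy) ∧ xx ≠ yy ∧ ¬ G.Adj xx yy ∧ S.card = h ∧ xx ∈ S ∧ yy ∈ S ∧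
      (∀ u v, u ∈ S → v ∈ S → u ≠ v → s(u, v) ≠ s(xx, yy) → G.Adj u v) := by
    intro e he
    have heE : e ∈ Gᶜ.edgeSet := SimpleGraph.mem_edgeFinset.mp he
    revert heE
    induction e using Sym2.ind with
    | _ xx yy =>
      intro heE
      rw [SimpleGraph.mem_edgeSet, SimpleGraph.compl_adj] at heE
      obtain ⟨hne, hnadj⟩ := heE
      obtain ⟨f, hfinj, hfadj⟩ := hsat.2 xx yy hne hnadj
      have hfadj' : ∀ a b : Fin h, a ≠ b →
          (G ⊔ Trigraph.single xx yy).Adj (f a) (f b) := by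
        intro a b hab
        exact hfadj a b ((SimpleGraph.top_adj a b).mpr hab)
      have huse : ∃ a b : Fin h, a ≠ b ∧ s(f a, f b) = s(xx, yy) := by
        by_contra hcon
        push_neg at hcon
        apply hsat.1
        refine ⟨f, hfinj, fun a b hab => ?_⟩
        have hab' : a ≠ b := (SimpleGraph.top_adj a b).mp hab
        rcases (SimpleGraph.sup_adj _ _ _ _).mp (hfadj' a b hab') with hG | hsing
        · exact hG
        · rw [Trigraph.single, SimpleGraph.fromEdgeSet_adj] at hsing
          exact absurd (Set.mem_singleton_iff.mp hsing.1) (hcon a b hab')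
      obtain ⟨a0, b0, hab0, hs0⟩ := huse
      refine ⟨xx, yy, Finset.image f Finset.univ, rfl, hne, hnadj, ?_, ?_, ?_, ?_⟩
      · rw [Finset.card_image_of_injective _ hfinj, Finset.card_univ, Fintype.card_fin]
      · rcases Sym2.eq_iff.mp hs0 with ⟨h1, _⟩ | ⟨_, h2⟩
        · exact Finset.mem_image.mpr ⟨a0, Finset.mem_univ _, h1⟩
        · exact Finset.mem_image.mpr ⟨b0, Finset.mem_univ _, h2⟩
      · rcases Sym2.eq_iff.mp hs0 with ⟨_, h2⟩ | ⟨h1, _⟩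
        · exact Finset.mem_image.mpr ⟨b0, Finset.mem_univ _, h2⟩
        · exact Finset.mem_image.mpr ⟨a0, Finset.mem_univ _, h1⟩
      · intro u v hu hv huv hsuv
        obtain ⟨a, _, rfl⟩ := Finset.mem_image.mp hu
        obtain ⟨b, _, rfl⟩ := Finset.mem_image.mp hv
        have hab : a ≠ b := fun hEq => huv (by rw [hEq])
        rcases (SimpleGraph.sup_adj _ _ _ _).mp (hfadj' a b hab) with hG | hsing
        · exact hG
        · rw [Trigraph.single, SimpleGraph.fromEdgeSet_adj] at hsing
          exact absurd (Set.mem_singleton_iff.mp hsing.1) hsuv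
  choose xx yy SS hedge hneq hnadj hcardS hmx hmy hprop using key
  let ι := {e // e ∈ NE}
  let xf : ι → Fin n := fun i => xx i.1 i.2
  let yf : ι → Fin n := fun i => yy i.1 i.2
  let Sf : ι → Finset (Fin n) := fun i => SS i.1 i.2
  have hSfcard : ∀ i : ι, (Sf i).card = h := fun i => hcardS i.1 i.2
  have hccard : ∀ i : ι, (Finset.univ \ Sf i).card = n - h := by
    intro i
    rw [Finset.card_sdiff_of_subset (Finset.subset_univ _), Finset.card_univ, Fintype.card_fin, hSfcard]
  let C : ι → Fin (n - h) → Fin n := fun j k =>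
    ((Finset.univ \ Sf j).equivFin.symm (Fin.cast (hccard j).symm k) : Fin n)
  have hCmem : ∀ (j : ι) (k : Fin (n - h)), C j k ∈ Finset.univ \ Sf j := fun j k =>
    ((Finset.univ \ Sf j).equivFin.symm (Fin.cast (hccard j).symm k)).2
  have hCnotS : ∀ (j : ι) (k : Fin (n - h)), C j k ∉ Sf j := by
    intro j k
    have := hCmem j k
    rw [Finset.mem_sdiff] at this
    exact this.2
  have hCsurj : ∀ (j : ι) (z : Fin n), z ∉ Sf j → ∃ k, C j k = z := by
    intro j z hz
    have hzmem : z ∈ Finset.univ \ Sf j := Finset.mem_sdiff.mpr ⟨Finset.mem_univ _, hz⟩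
    refine ⟨Fin.cast (hccard j) ((Finset.univ \ Sf j).equivFin ⟨z, hzmem⟩), ?_⟩
    show (((Finset.univ \ Sf j).equivFin.symm (Fin.cast (hccard j).symm
      (Fin.cast (hccard j) ((Finset.univ \ Sf j).equivFin ⟨z, hzmem⟩)))) : Fin n) = z
    simp
  have hCinj : ∀ j : ι, Function.Injective (C j) := by
    intro j k k' hEq
    have h1 : ((Finset.univ \ Sf j).equivFin.symm (Fin.cast (hccard j).symm k))
        = ((Finset.univ \ Sf j).equivFin.symm (Fin.cast (hccard j).symm k')) :=
      Subtype.ext hEq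
    have h2 := (Finset.univ \ Sf j).equivFin.symm.injective h1
    exact Fin.cast_injective _ h2
  have hCne : ∀ (i : ι) (k : Fin (n - h)), C i k ≠ xf i ∧ C i k ≠ yf i := by
    intro i k
    constructor
    · intro hEq
      exact hCnotS i k (hEq ▸ hmx i.1 i.2)
    · intro hEq
      exact hCnotS i k (hEq ▸ hmy i.1 i.2)
  have hedgediff : ∀ i j : ι, i ≠ j → s(xf i, yf i) ≠ s(xf j, yf j) := by
    intro i j hij hEq
    apply hij
    apply Subtype.ext
    rw [hedge i.1 i.2, hedge j.1 j.2]
    exact hEq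
  have hcrossC : ∀ i j : ι, i ≠ j → ∃ k, C j k = xf i ∨ C j k = yf i := by
    intro i j hij
    by_cases hxin : xf i ∈ Sf j
    · have hyout : yf i ∉ Sf j := by
        intro hyin
        exact hnadj i.1 i.2 (hprop j.1 j.2 (xf i) (yf i) hxin hyin (hneq i.1 i.2)
          (hedgediff i j hij))
      obtain ⟨k, hk⟩ := hCsurj j (yf i) hyout
      exact ⟨k, Or.inr hk⟩
    · obtain ⟨k, hk⟩ := hCsurj j (xf i) hxin
      exact ⟨k, Or.inl hk⟩
  have hb := bollobas_abstract hn xf yf C (fun i => hneq i.1 i.2) hCne hCinj hcrossC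
  rw [Fintype.card_coe] at hb
  rw [show dd n h = n - h + 2 from rfl] at hb
  have hsplit : G.edgeFinset.card + NE.card = n.choose 2 := by
    have hdisj : Disjoint G.edgeFinset Gᶜ.edgeFinset := by
      rw [SimpleGraph.edgeFinset, SimpleGraph.edgeFinset, Set.disjoint_toFinset]
      exact SimpleGraph.disjoint_edgeSet.mpr disjoint_compl_right
    have hunion : G.edgeFinset ∪ Gᶜ.edgeFinset = (⊤ : SimpleGraph (Fin n)).edgeFinset := by
      ext e
      induction e using Sym2.ind with
      | _ u v =>
        simp only [Finset.mem_union, SimpleGraph.mem_edgeFinset, SimpleGraph.mem_edgeSet,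
          SimpleGraph.compl_adj, SimpleGraph.top_adj]
        by_cases huv : u = v
        · simp [huv]
        · simp [huv]
          tauto
    have := Finset.card_union_of_disjoint hdisj
    rw [hunion, SimpleGraph.card_edgeFinset_top_eq_card_choose_two, Fintype.card_fin] at this
    rw [hNE]
    omega
  have harith := sat_count_arith n h hh hn
  have hncard : G.edgeSet.ncard = G.edgeFinset.card := Set.ncard_eq_toFinset_card' _
  have hNEcard : NE.card = Gᶜ.edgeFinset.card := by rw [hNE]
  rw [hncard]
  obtain ⟨t, ht⟩ : ∃ t, t = (h - 2) * n - (h - 1).choose 2 := ⟨_, rfl⟩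
  rw [← ht] at harith ⊢
  omega

/-- The canonical `K_h`-saturated graph: K_{h-2} joined to an independent set. -/
def Gsat (n h : ℕ) : SimpleGraph (Fin n) where
  Adj u v := u ≠ v ∧ ((u : ℕ) < h - 2 ∨ (v : ℕ) < h - 2)
  symm := by
    constructor
    intro u v hv
    exact ⟨hv.1.symm, hv.2.symm⟩
  loopless := ⟨fun v hv => hv.1 rfl⟩

lemma Gsat_adj {n h : ℕ} (u v : Fin n) :
    (Gsat n h).Adj u v ↔ u ≠ v ∧ ((u : ℕ) < h - 2 ∨ (v : ℕ) < h - 2) := Iff.rfl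

lemma Gsat_isSat {n h : ℕ} (hh : 3 ≤ h) (hn : h ≤ n) :
    Trigraph.IsSat (⊤ : SimpleGraph (Fin h)) (Gsat n h) := by
  classical
  constructor
  · rintro ⟨f, hfinj, hfadj⟩
    set t := Finset.univ.filter (fun a : Fin h => (f a : ℕ) < h - 2) with hts
    have htcard : t.card ≤ h - 2 := by
      have heq : t.card = (t.image fun a => (f a : ℕ)).card :=
        (Finset.card_image_of_injective _ (Fin.val_injective.comp hfinj)).symm
      have hsub : (t.image fun a => (f a : ℕ)) ⊆ Finset.range (h - 2) := by
        intro m hm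
        obtain ⟨a, ha, rfl⟩ := Finset.mem_image.mp hm
        exact Finset.mem_range.mpr (Finset.mem_filter.mp ha).2
      rw [heq]
      calc (t.image fun a => (f a : ℕ)).card ≤ (Finset.range (h - 2)).card :=
            Finset.card_le_card hsub
        _ = h - 2 := Finset.card_range _
    have hscard : 1 < (Finset.univ \ t).card := by
      rw [Finset.card_sdiff_of_subset (Finset.subset_univ _), Finset.card_univ, Fintype.card_fin]
      omega
    obtain ⟨a, ha, b, hb, hab⟩ := Finset.one_lt_card.mp hscard
    have hfa : ¬ ((f a : ℕ) < h - 2) := by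
      have := (Finset.mem_sdiff.mp ha).2
      simp only [hts, Finset.mem_filter, Finset.mem_univ, true_and] at this
      exact this
    have hfb : ¬ ((f b : ℕ) < h - 2) := by
      have := (Finset.mem_sdiff.mp hb).2
      simp only [hts, Finset.mem_filter, Finset.mem_univ, true_and] at this
      exact this
    have := (hfadj a b ((SimpleGraph.top_adj a b).mpr hab)).2
    tauto
  · intro u v huv hnadj
    rw [Gsat_adj] at hnadj
    push_neg at hnadj
    have hu2 : h - 2 ≤ (u : ℕ) ∧ h - 2 ≤ (v : ℕ) := by
      have := hnadj huv
      omega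
    set f : Fin h → Fin n := fun i =>
      if h1 : (i : ℕ) < h - 2 then (⟨(i : ℕ), by omega⟩ : Fin n)
      else if (i : ℕ) = h - 2 then u else v with hf
    have hval : ∀ i : Fin h, ((f i : ℕ) < h - 2 ∧ (f i : ℕ) = (i : ℕ)) ∨
        (h - 2 ≤ (f i : ℕ) ∧ ((i : ℕ) = h - 2 ∧ f i = u ∨ (i : ℕ) = h - 1 ∧ f i = v)) := by
      intro i
      rw [hf]
      simp only
      split_ifs with h1 h2
      · exact Or.inl ⟨h1, rfl⟩
      · exact Or.inr ⟨hu2.1, Or.inl ⟨h2, rfl⟩⟩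
      · refine Or.inr ⟨hu2.2, Or.inr ⟨?_, rfl⟩⟩
        have := i.isLt
        omega
    have hfinj : Function.Injective f := by
      intro a b hEq
      apply Fin.val_injective
      rcases hval a with ⟨ha1, ha2⟩ | ⟨ha1, ha2⟩ <;> rcases hval b with ⟨hb1, hb2⟩ | ⟨hb1, hb2⟩
      · rw [← ha2, ← hb2, hEq]
      · rw [hEq] at ha1; omega
      · rw [hEq] at ha1; omega
      · rcases ha2 with ⟨ha3, ha4⟩ | ⟨ha3, ha4⟩ <;> rcases hb2 with ⟨hb3, hb4⟩ | ⟨hb3, hb4⟩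
        · omega
        · exfalso; apply huv; rw [← ha4, ← hb4, hEq]
        · exfalso; apply huv; rw [← ha4, ← hb4, ← hEq]
        · omega
    refine ⟨f, hfinj, fun a b hab => ?_⟩
    have hab' : a ≠ b := (SimpleGraph.top_adj a b).mp hab
    have hfne : f a ≠ f b := fun hc => hab' (hfinj hc)
    rw [SimpleGraph.sup_adj]
    rcases hval a with ⟨ha1, _⟩ | ⟨_, ha2⟩
    · exact Or.inl ⟨hfne, Or.inl ha1⟩
    · rcases hval b with ⟨hb1, _⟩ | ⟨_, hb2⟩
      · exact Or.inl ⟨hfne, Or.inr hb1⟩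
      · right
        rw [Trigraph.single, SimpleGraph.fromEdgeSet_adj]
        refine ⟨?_, hfne⟩
        rw [Set.mem_singleton_iff]
        rcases ha2 with ⟨_, ha4⟩ | ⟨_, ha4⟩ <;> rcases hb2 with ⟨_, hb4⟩ | ⟨_, hb4⟩
        · exfalso; apply hfne; rw [ha4, hb4]
        · rw [ha4, hb4]
        · rw [ha4, hb4]; exact Sym2.eq_swap
        · exfalso; apply hfne; rw [ha4, hb4]

instance GsatDec {n h : ℕ} : DecidableRel (Gsat n h).Adj := fun _ _ => instDecidableAnd

lemma Gsat_count {n h : ℕ} (hh : 3 ≤ h) (hn : h ≤ n) :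
    (Gsat n h).edgeSet.ncard = (h - 2) * n - (h - 1).choose 2 := by
  classical
  have hdeg : ∀ v : Fin n, (Gsat n h).degree v =
      if (v : ℕ) < h - 2 then n - 1 else h - 2 := by
    intro v
    by_cases hv : (v : ℕ) < h - 2
    · rw [if_pos hv]
      have hnb : (Gsat n h).neighborFinset v = Finset.univ \ {v} := by
        ext x
        simp only [SimpleGraph.mem_neighborFinset, Gsat_adj, Finset.mem_sdiff,
          Finset.mem_univ, true_and, Finset.mem_singleton]
        constructor
        · intro hx
          exact fun hc => hx.1 hc.symm
        · intro hx
          exact ⟨fun hc => hx hc.symm, Or.inl hv⟩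
      rw [SimpleGraph.degree, hnb, Finset.card_sdiff_of_subset (by simp), Finset.card_univ,
        Fintype.card_fin, Finset.card_singleton]
    · rw [if_neg hv]
      have hnb : (Gsat n h).neighborFinset v
          = Finset.univ.filter (fun x : Fin n => (x : ℕ) < h - 2) := by
        ext x
        simp only [SimpleGraph.mem_neighborFinset, Gsat_adj, Finset.mem_filter,
          Finset.mem_univ, true_and]
        constructor
        · intro hx
          rcases hx.2 with hc | hc
          · omega
          · exact hc
        · intro hx
          refine ⟨?_, Or.inr hx⟩
          intro hc
          rw [hc] at hv
          exact hv hx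
      rw [SimpleGraph.degree, hnb, fin_filter_val_lt n (h - 2) (by omega)]
  have hsum := SimpleGraph.sum_degrees_eq_twice_card_edges (Gsat n h)
  rw [Finset.sum_congr rfl (fun v _ => hdeg v)] at hsum
  rw [Finset.sum_ite, Finset.sum_const, Finset.sum_const, smul_eq_mul, smul_eq_mul] at hsum
  have hc1 : (Finset.univ.filter (fun v : Fin n => (v : ℕ) < h - 2)).card = h - 2 :=
    fin_filter_val_lt n (h - 2) (by omega)
  have hc2 : (Finset.univ.filter (fun v : Fin n => ¬ (v : ℕ) < h - 2)).card = n - (h - 2) := by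
    have := Finset.card_filter_add_card_filter_not
      (s := (Finset.univ : Finset (Fin n))) (p := fun v : Fin n => (v : ℕ) < h - 2)
    rw [Finset.card_univ, Fintype.card_fin] at this
    omega
  rw [hc1, hc2] at hsum
  have hncard : (Gsat n h).edgeSet.ncard = (Gsat n h).edgeFinset.card :=
    Set.ncard_eq_toFinset_card' _
  rw [hncard]
  -- arithmetic
  obtain ⟨k, rfl⟩ : ∃ k, h = k + 3 := ⟨h - 3, by omega⟩
  obtain ⟨m, rfl⟩ : ∃ m, n = m + (k + 3) := ⟨n - (k + 3), by omega⟩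
  simp only [show k + 3 - 2 = k + 1 by omega, show k + 3 - 1 = k + 2 by omega] at hsum ⊢
  have hC : 2 * (k + 2).choose 2 = (k + 2) * (k + 1) := by
    rw [two_mul_choose_two]
    congr 1
  have e1 : (k + 1) * (m + (k + 3) - 1) = (k+1)*m + k*k + 3*k + 2 := by
    rw [show m + (k + 3) - 1 = m + (k + 2) by omega]
    ring
  have e2 : (m + (k + 3) - (k + 1)) * (k + 1) = (k+1)*m + 2*k + 2 := by
    rw [show m + (k + 3) - (k + 1) = m + 2 by omega]
    ring
  have e3 : (k + 2) * (k + 1) = k*k + 3*k + 2 := by ring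
  have e4 : (k + 1) * (m + (k + 3)) = (k+1)*m + k*k + 4*k + 3 := by ring
  omega

open Trigraph in
lemma single_le_of_adj {V : Type*} {G : SimpleGraph V} {u v : V} (hadj : G.Adj u v) :
    Trigraph.single u v ≤ G := by
  intro a b hab
  rw [Trigraph.single, SimpleGraph.fromEdgeSet_adj] at hab
  obtain ⟨hmem, _⟩ := hab
  rw [Set.mem_singleton_iff] at hmem
  rcases Sym2.eq_iff.mp hmem with ⟨rfl, rfl⟩ | ⟨rfl, rfl⟩
  · exact hadj
  · exact hadj.symm

open Trigraph in
lemma sets_eq (n h : ℕ) :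
    {k : ℕ∞ | ∃ T : Trigraph (Fin n), IsIndSat (⊤ : SimpleGraph (Fin h)) T ∧
        (T.gray.edgeSet.ncard : ℕ∞) = k}
      = {k : ℕ∞ | ∃ G : SimpleGraph (Fin n), IsSat (⊤ : SimpleGraph (Fin h)) G ∧
        (G.edgeSet.ncard : ℕ∞) = k} := by
  ext k
  simp only [Set.mem_setOf_eq]
  constructor
  · rintro ⟨T, hIS, hk⟩
    -- black is empty
    have hblack : T.black = ⊥ := by
      by_contra hne
      have : ∃ u v, T.black.Adj u v := by
        by_contra hno
        push_neg at hno
        apply hne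
        ext a b
        simp only [SimpleGraph.bot_adj, iff_false]
        exact hno a b
      obtain ⟨u, v, hadj⟩ := this
      have hne' : u ≠ v := hadj.ne
      have hnotgray : ¬ T.gray.Adj u v := fun hg => T.disjoint u v ⟨hadj, hg⟩
      obtain ⟨R, hreal, hcopy⟩ := hIS.2 u v hne' hnotgray
      have hsle : Trigraph.single u v ≤ T.black := single_le_of_adj hadj
      have hRle : R ≤ T.black ⊔ T.gray := by
        refine le_trans hreal.2 ?_
        show (T.black \ Trigraph.single u v) ⊔ (T.gray ⊔ Trigraph.single u v)
          ≤ T.black ⊔ T.gray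
        exact sup_le (le_trans sdiff_le le_sup_left)
          (sup_le le_sup_right (le_trans hsle le_sup_left))
      apply hIS.1 (R ⊔ T.black) ⟨le_sup_right, sup_le hRle le_sup_left⟩
      obtain ⟨emb⟩ := hcopy
      refine ⟨⟨⟨emb, emb.injective⟩, ?_⟩⟩
      intro a b
      simp only [Function.Embedding.coeFn_mk, SimpleGraph.top_adj]
      constructor
      · intro hAdj
        exact fun hEq => hAdj.ne (by rw [hEq])
      · intro hne2
        exact (SimpleGraph.sup_adj _ _ _ _).mpr
          (Or.inl (emb.map_adj_iff.mpr ((SimpleGraph.top_adj a b).mpr hne2)))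
    refine ⟨T.gray, ⟨?_, ?_⟩, hk⟩
    · rintro ⟨f, hfinj, hfadj⟩
      apply hIS.1 T.gray ⟨by rw [hblack]; exact bot_le, by rw [hblack, bot_sup_eq]⟩
      refine ⟨⟨⟨f, hfinj⟩, ?_⟩⟩
      intro a b
      simp only [Function.Embedding.coeFn_mk, SimpleGraph.top_adj]
      constructor
      · intro hAdj
        exact fun hEq => hAdj.ne (by rw [hEq])
      · intro hne2
        exact hfadj a b ((SimpleGraph.top_adj a b).mpr hne2)
    · intro u v hne hnadj
      obtain ⟨R, hreal, hcopy⟩ := hIS.2 u v hne hnadj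
      have hRle : R ≤ T.gray ⊔ Trigraph.single u v := by
        refine le_trans hreal.2 ?_
        show (T.black \ Trigraph.single u v) ⊔ (T.gray ⊔ Trigraph.single u v)
          ≤ T.gray ⊔ Trigraph.single u v
        refine sup_le ?_ le_rfl
        rw [hblack]
        intro a b hab
        rw [SimpleGraph.sdiff_adj] at hab
        exact absurd hab.1 (by simp)
      obtain ⟨emb⟩ := hcopy
      refine ⟨emb, emb.injective, fun a b hab => ?_⟩
      exact hRle (emb.map_adj_iff.mpr hab)
  · rintro ⟨G, hsat, hk⟩
    refine ⟨⟨⊥, G, fun u v hc => by simp at hc⟩, ⟨?_, ?_⟩, hk⟩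
    · rintro R ⟨_, hRle⟩ ⟨emb⟩
      rw [bot_sup_eq] at hRle
      apply hsat.1
      refine ⟨emb, emb.injective, fun a b hab => ?_⟩
      exact hRle (emb.map_adj_iff.mpr hab)
    · intro u v hne hnadj
      obtain ⟨f, hfinj, hfadj⟩ := hsat.2 u v hne hnadj
      refine ⟨G ⊔ Trigraph.single u v, ⟨?_, ?_⟩, ?_⟩
      · show (⊥ : SimpleGraph (Fin n)) \ Trigraph.single u v ≤ G ⊔ Trigraph.single u v
        intro a b hab
        rw [SimpleGraph.sdiff_adj] at hab
        exact absurd hab.1 (by simp)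
      · show G ⊔ Trigraph.single u v
          ≤ ((⊥ : SimpleGraph (Fin n)) \ Trigraph.single u v) ⊔ (G ⊔ Trigraph.single u v)
        exact le_sup_right
      · refine ⟨⟨⟨f, hfinj⟩, ?_⟩⟩
        intro a b
        simp only [Function.Embedding.coeFn_mk, SimpleGraph.top_adj]
        constructor
        · intro hAdj
          exact fun hEq => hAdj.ne (by rw [hEq])
        · intro hne2
          exact hfadj a b ((SimpleGraph.top_adj a b).mpr hne2)

/-- For all `n ≥ h ≥ 3`,
`indsat(n, K_h) = (h−2)·n − C(h−1, 2)`, and in particular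
`indsat(n, K_h) = sat(n, K_h)`. -/
theorem indsat_completeGraph (n h : ℕ) (hh : 3 ≤ h) (hn : h ≤ n) :
    Trigraph.indsat n (⊤ : SimpleGraph (Fin h)) =
      (((h - 2) * n - (h - 1).choose 2 : ℕ) : ℕ∞) ∧
    Trigraph.indsat n (⊤ : SimpleGraph (Fin h)) =
      Trigraph.satNum n (⊤ : SimpleGraph (Fin h)) := by
  have heq : Trigraph.indsat n (⊤ : SimpleGraph (Fin h))
      = Trigraph.satNum n (⊤ : SimpleGraph (Fin h)) := by
    unfold Trigraph.indsat Trigraph.satNum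
    rw [sets_eq n h]
  have hval : Trigraph.satNum n (⊤ : SimpleGraph (Fin h))
      = (((h - 2) * n - (h - 1).choose 2 : ℕ) : ℕ∞) := by
    apply le_antisymm
    · apply sInf_le
      exact ⟨Gsat n h, Gsat_isSat hh hn, by rw [Gsat_count hh hn]⟩
    · apply le_sInf
      rintro k ⟨G, hsat, rfl⟩
      exact_mod_cast sat_lower hh hn G hsat
  exact ⟨heq.trans hval, heq⟩
end Boll
end

section
/- Let K_h^- denote the graph on h vertices obtained from the complete graph K_h by deleting exactly one edge. Then for all integers n ≥ h ≥ 3, indsat(n, K_h^-) = 0. -/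
open SimpleGraph

/-- For `K_h^-`, the complete graph on `h` vertices with one edge
deleted, and all `n ≥ h ≥ 3`, `indsat(n, K_h^-) = 0`. -/
theorem indsat_completeMinusEdge (n h : ℕ) (hh : 3 ≤ h) (hn : h ≤ n) :
    Trigraph.indsat n
      ((⊤ : SimpleGraph (Fin h)) \
        Trigraph.single (⟨0, by omega⟩ : Fin h) (⟨1, by omega⟩ : Fin h)) = 0 := by
  set z0 : Fin h := ⟨0, by omega⟩
  set z1 : Fin h := ⟨1, by omega⟩
  have hz : z0 ≠ z1 := by simp [z0, z1, Fin.ext_iff]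
  set H : SimpleGraph (Fin h) := (⊤ : SimpleGraph (Fin h)) \ Trigraph.single z0 z1 with hH
  set T : Trigraph (Fin n) := ⟨⊤, ⊥, by simp⟩ with hT
  have hsat : Trigraph.IsIndSat H T := by
    constructor
    · rintro R ⟨h1, h2⟩ ⟨e⟩
      have hR : R = ⊤ := top_le_iff.mp h1
      have hadj : ¬ H.Adj z0 z1 := by
        simp [hH, Trigraph.single, SimpleGraph.fromEdgeSet_adj, hz]
      subst hR
      have : ¬ (⊤ : SimpleGraph (Fin n)).Adj (e z0) (e z1) :=
        fun hc => hadj (e.map_rel_iff.mp hc)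
      simp only [SimpleGraph.top_adj, not_ne_iff] at this
      exact hz (e.injective this)
    · intro u v huv _
      refine ⟨(⊤ : SimpleGraph (Fin n)) \ Trigraph.single u v, ⟨le_refl _, le_sup_left⟩, ?_⟩
      -- build the embedding
      set g : Fin h → Fin n := Fin.castLE hn with hg
      have ginj : Function.Injective g := Fin.castLE_injective hn
      set σ : Equiv.Perm (Fin n) := Equiv.swap (g z0) u with hσ
      have hσg1u : σ (g z1) ≠ u := by
        intro hc
        have hc2 : σ (g z1) = σ (g z0) := by rw [hc, Equiv.swap_apply_left]
        exact hz (ginj (σ.injective hc2)).symm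
      set τ : Equiv.Perm (Fin n) := Equiv.swap (σ (g z1)) v with hτ
      set f : Fin h → Fin n := fun a => τ (σ (g a)) with hf
      have finj : Function.Injective f := fun a b hab => ginj (σ.injective (τ.injective hab))
      have hf0 : f z0 = u := by
        have : σ (g z0) = u := Equiv.swap_apply_left _ _
        rw [hf]
        simp only [this]
        exact Equiv.swap_apply_of_ne_of_ne (Ne.symm hσg1u) huv
      have hf1 : f z1 = v := Equiv.swap_apply_left _ _
      have key : ∀ a b : Fin h, s(f a, f b) = s(u, v) ↔ s(a, b) = s(z0, z1) := by
        intro a b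
        rw [Sym2.eq_iff, Sym2.eq_iff]
        constructor
        · rintro (⟨ha, hb⟩ | ⟨ha, hb⟩)
          · exact Or.inl ⟨finj (by rw [ha, hf0]), finj (by rw [hb, hf1])⟩
          · exact Or.inr ⟨finj (by rw [ha, hf1]), finj (by rw [hb, hf0])⟩
        · rintro (⟨ha, hb⟩ | ⟨ha, hb⟩)
          · exact Or.inl ⟨by rw [ha, hf0], by rw [hb, hf1]⟩
          · exact Or.inr ⟨by rw [ha, hf1], by rw [hb, hf0]⟩
      refine ⟨⟨⟨f, finj⟩, ?_⟩⟩
      intro a b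
      simp only [Function.Embedding.coeFn_mk, SimpleGraph.sdiff_adj, SimpleGraph.top_adj,
        hH, Trigraph.single, SimpleGraph.fromEdgeSet_adj, Set.mem_singleton_iff]
      constructor
      · rintro ⟨hne, hns⟩
        have hab : a ≠ b := fun hc => hne (by rw [hc])
        exact ⟨hab, fun hc => hns ⟨(key a b).mpr hc.1, hne⟩⟩
      · rintro ⟨hab, hns⟩
        refine ⟨fun hc => hab (finj hc), fun hc => hns ⟨(key a b).mp hc.1, hab⟩⟩
  have h0 : (0 : ℕ∞) ∈ {k : ℕ∞ | ∃ T : Trigraph (Fin n), Trigraph.IsIndSat H T ∧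
      (T.gray.edgeSet.ncard : ℕ∞) = k} := by
    refine ⟨T, hsat, ?_⟩
    simp [hT]
  exact le_antisymm (sInf_le h0) zero_le
end

section
/- For all integers n ≥ 4, there exists a P_4-induced-saturated trigraph on n vertices with exactly ⌈(n+1)/3⌉ gray edges; hence indsat(n, P_4) ≤ ⌈(n+1)/3⌉. -/
open SimpleGraph

namespace IndSatP4

def bRel (g x y : ℕ) : Prop :=
  (2*g ≤ x ∧ 2*g ≤ y) ∨ (2*g ≤ x ∧ y < 2*g ∧ x - 2*g + y/2 < g) ∨
    (2*g ≤ y ∧ x < 2*g ∧ y - 2*g + x/2 < g)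

def gRel (g x y : ℕ) : Prop := x < 2*g ∧ y < 2*g ∧ x/2 = y/2

def blackG (n g : ℕ) : SimpleGraph (Fin n) where
  Adj u v := u ≠ v ∧ bRel g u.val v.val
  symm := ⟨by intro u v ⟨h1, h2⟩; exact ⟨Ne.symm h1, by unfold bRel at *; tauto⟩⟩
  loopless := ⟨by intro u ⟨h1, _⟩; exact h1 rfl⟩

def grayG (n g : ℕ) : SimpleGraph (Fin n) where
  Adj u v := u ≠ v ∧ gRel g u.val v.val
  symm := ⟨by intro u v ⟨h1, h2⟩; exact ⟨Ne.symm h1, by unfold gRel at *; tauto⟩⟩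
  loopless := ⟨by intro u ⟨h1, _⟩; exact h1 rfl⟩

def TT (n g : ℕ) : Trigraph (Fin n) where
  black := blackG n g
  gray := grayG n g
  disjoint := by
    intro u v ⟨⟨_, hb⟩, ⟨_, hg⟩⟩
    unfold bRel at hb; unfold gRel at hg; omega

lemma blackG_adj {n g : ℕ} {u v : Fin n} :
    (blackG n g).Adj u v ↔ u.val ≠ v.val ∧ bRel g u.val v.val := by
  constructor
  · rintro ⟨h1, h2⟩; exact ⟨fun h => h1 (Fin.ext h), h2⟩
  · rintro ⟨h1, h2⟩; exact ⟨fun h => h1 (by rw [h]), h2⟩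

lemma grayG_adj {n g : ℕ} {u v : Fin n} :
    (grayG n g).Adj u v ↔ u.val ≠ v.val ∧ gRel g u.val v.val := by
  constructor
  · rintro ⟨h1, h2⟩; exact ⟨fun h => h1 (Fin.ext h), h2⟩
  · rintro ⟨h1, h2⟩; exact ⟨fun h => h1 (by rw [h]), h2⟩

/-- Build an induced copy of `P4` from four vertices with the right adjacencies. -/
lemma hasInducedCopy_p4 {V : Type*} (G : SimpleGraph V) (v0 v1 v2 v3 : V)
    (h01 : G.Adj v0 v1) (h12 : G.Adj v1 v2) (h23 : G.Adj v2 v3)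
    (h02 : ¬ G.Adj v0 v2) (h03 : ¬ G.Adj v0 v3) (h13 : ¬ G.Adj v1 v3) :
    Trigraph.HasInducedCopy (pathGraph 4) G := by
  have d01 : v0 ≠ v1 := G.ne_of_adj h01
  have d12 : v1 ≠ v2 := G.ne_of_adj h12
  have d23 : v2 ≠ v3 := G.ne_of_adj h23
  have d02 : v0 ≠ v2 := by rintro rfl; exact h03 h23
  have d13 : v1 ≠ v3 := by rintro rfl; exact h03 h01
  have d03 : v0 ≠ v3 := by rintro rfl; exact h02 (G.adj_symm h23)
  refine ⟨⟨⟨fun i => ![v0, v1, v2, v3] i, ?_⟩, ?_⟩⟩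
  · intro a b hab
    fin_cases a <;> fin_cases b <;> simp_all
  · intro a b
    fin_cases a <;> fin_cases b <;>
      simp only [Matrix.cons_val_zero, Matrix.cons_val_one, Matrix.head_cons,
        Matrix.cons_val_two, Matrix.tail_cons, Matrix.cons_val_three, pathGraph_adj] <;>
      constructor <;> intro h <;>
      first
        | omega
        | decide
        | assumption
        | exact G.adj_symm h01
        | exact G.adj_symm h12
        | exact G.adj_symm h23
        | exact absurd h (G.irrefl)
        | exact absurd (G.adj_symm h) h02
        | exact absurd (G.adj_symm h) h03
        | exact absurd (G.adj_symm h) h13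
        | exact absurd h h02
        | exact absurd h h03
        | exact absurd h h13

set_option maxHeartbeats 1000000 in
lemma realization_p4_free {n g : ℕ} (R : SimpleGraph (Fin n))
    (hR : (TT n g).IsRealization R) :
    ¬ Trigraph.HasInducedCopy (pathGraph 4) R := by
  rintro ⟨f⟩
  obtain ⟨hbR, hRbg⟩ := hR
  have hadj : ∀ a b : Fin n, R.Adj a b →
      a.val ≠ b.val ∧ (bRel g a.val b.val ∨ gRel g a.val b.val) := by
    intro a b h
    have h2 := hRbg h
    rw [SimpleGraph.sup_adj] at h2
    rcases h2 with h2 | h2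
    · exact ⟨(blackG_adj.mp h2).1, Or.inl (blackG_adj.mp h2).2⟩
    · exact ⟨(grayG_adj.mp h2).1, Or.inr (grayG_adj.mp h2).2⟩
  have hnadj : ∀ a b : Fin n, ¬ R.Adj a b → ¬ (a.val ≠ b.val ∧ bRel g a.val b.val) :=
    fun a b h hc => h (hbR (blackG_adj.mpr hc))
  have p01 : (pathGraph 4).Adj 0 1 := by rw [pathGraph_adj]; decide
  have p12 : (pathGraph 4).Adj 1 2 := by rw [pathGraph_adj]; decide
  have p23 : (pathGraph 4).Adj 2 3 := by rw [pathGraph_adj]; decide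
  have p02 : ¬ (pathGraph 4).Adj 0 2 := by rw [pathGraph_adj]; decide
  have p03 : ¬ (pathGraph 4).Adj 0 3 := by rw [pathGraph_adj]; decide
  have p13 : ¬ (pathGraph 4).Adj 1 3 := by rw [pathGraph_adj]; decide
  have a01 := hadj _ _ (f.map_adj_iff.mpr p01)
  have a12 := hadj _ _ (f.map_adj_iff.mpr p12)
  have a23 := hadj _ _ (f.map_adj_iff.mpr p23)
  have n02 := hnadj _ _ (fun h => p02 (f.map_adj_iff.mp h))
  have n03 := hnadj _ _ (fun h => p03 (f.map_adj_iff.mp h))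
  have n13 := hnadj _ _ (fun h => p13 (f.map_adj_iff.mp h))
  have d02 : (f 0).val ≠ (f 2).val := fun h => absurd (f.injective (Fin.ext h)) (by decide)
  have d03 : (f 0).val ≠ (f 3).val := fun h => absurd (f.injective (Fin.ext h)) (by decide)
  have d13 : (f 1).val ≠ (f 3).val := fun h => absurd (f.injective (Fin.ext h)) (by decide)
  unfold bRel at n02 n03 n13
  unfold bRel gRel at a01 a12 a23
  omega

lemma gray_edgeSet (n g : ℕ) (h2g : 2*g ≤ n) :
    (TT n g).gray.edgeSet.ncard = g := by
  classical
  have hf : ∀ j : Fin g, 2*j.val < n ∧ 2*j.val+1 < n := fun j => by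
    have := j.isLt; omega
  set F : Fin g → Sym2 (Fin n) :=
    fun j => s(⟨2*j.val, (hf j).1⟩, ⟨2*j.val+1, (hf j).2⟩) with hF
  have hinj : Function.Injective F := by
    intro j j' h
    rw [hF, Sym2.eq_iff] at h
    apply Fin.ext
    rcases h with ⟨h1, _⟩ | ⟨h1, _⟩ <;>
      · have := congrArg Fin.val h1
        simp only [Fin.val_mk] at this
        omega
  have hset : (TT n g).gray.edgeSet = Set.range F := by
    ext e
    refine e.ind (fun u v => ?_)
    simp only [SimpleGraph.mem_edgeSet, Set.mem_range]
    constructor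
    · intro h
      rw [show (TT n g).gray = grayG n g from rfl, grayG_adj] at h
      obtain ⟨hne, hu, hv, hj⟩ := h
      have hjg : u.val / 2 < g := by omega
      refine ⟨⟨u.val/2, hjg⟩, ?_⟩
      rw [hF]
      have : (u.val = 2*(u.val/2) ∧ v.val = 2*(u.val/2)+1) ∨
          (v.val = 2*(u.val/2) ∧ u.val = 2*(u.val/2)+1) := by omega
      show s(_, _) = s(u, v)
      rw [Sym2.eq_iff]
      rcases this with ⟨h1, h2⟩ | ⟨h1, h2⟩
      · exact Or.inl ⟨Fin.ext (by simpa using h1.symm), Fin.ext (by simpa using h2.symm)⟩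
      · exact Or.inr ⟨Fin.ext (by simpa using h1.symm), Fin.ext (by simpa using h2.symm)⟩
    · rintro ⟨j, hj⟩
      rw [hF] at hj
      have hj' := hj.symm
      rw [Sym2.eq_iff] at hj'
      rw [show (TT n g).gray = grayG n g from rfl, grayG_adj]
      have hlt := j.isLt
      rcases hj' with ⟨h1, h2⟩ | ⟨h1, h2⟩ <;>
        · have e1 := congrArg Fin.val h1
          have e2 := congrArg Fin.val h2
          simp only [Fin.val_mk] at e1 e2
          refine ⟨by omega, ?_⟩
          unfold gRel
          omega
  rw [hset, ← Set.image_univ, Set.ncard_image_of_injective _ hinj, Set.ncard_univ,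
    Nat.card_eq_fintype_card, Fintype.card_fin]

lemma single_adj {V : Type*} {u v x y : V} :
    (Trigraph.single u v).Adj x y ↔ ((x = u ∧ y = v) ∨ (x = v ∧ y = u)) ∧ x ≠ y := by
  simp only [Trigraph.single, SimpleGraph.fromEdgeSet_adj, Set.mem_singleton_iff, Sym2.eq_iff]

lemma single_le {V : Type*} {u v : V} {G : SimpleGraph V} (h : G.Adj u v) :
    Trigraph.single u v ≤ G := by
  intro x y hxy
  rw [single_adj] at hxy
  rcases hxy with ⟨⟨rfl, rfl⟩ | ⟨rfl, rfl⟩, _⟩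
  · exact h
  · exact h.symm

lemma single_comm {V : Type*} (u v : V) : Trigraph.single u v = Trigraph.single v u := by
  unfold Trigraph.single
  rw [Sym2.eq_swap]

lemma flip_comm {V : Type*} (T : Trigraph V) (u v : V) : T.flip u v = T.flip v u := by
  unfold Trigraph.flip
  congr 1 <;> rw [single_comm]

lemma flip_black {V : Type*} (T : Trigraph V) (u v : V) :
    (T.flip u v).black = T.black \ Trigraph.single u v := rfl

lemma flip_gray {V : Type*} (T : Trigraph V) (u v : V) :
    (T.flip u v).gray = T.gray ⊔ Trigraph.single u v := rfl

section Flips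

variable {n g : ℕ}

/-- Case: both `u` and `v` are pair vertices, in different pairs. -/
lemma flip_pair_pair (hg : 2 ≤ g) (h2g : 2*g ≤ n) (u v : Fin n)
    (hu : u.val < 2*g) (hv : v.val < 2*g) (hj : u.val/2 ≠ v.val/2) :
    ∃ R : SimpleGraph (Fin n), ((TT n g).flip u v).IsRealization R ∧
      Trigraph.HasInducedCopy (pathGraph 4) R := by
  have hun : u.val < n := u.isLt
  have hvn : v.val < n := v.isLt
  obtain ⟨pu, hpun, hpu1, hpu2, hpu3⟩ :
      ∃ pu, pu < n ∧ pu/2 = u.val/2 ∧ pu ≠ u.val ∧ pu < 2*g :=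
    ⟨2*(u.val/2)+1 - u.val%2, by omega, by omega, by omega, by omega⟩
  obtain ⟨pv, hpvn, hpv1, hpv2, hpv3⟩ :
      ∃ pv, pv < n ∧ pv/2 = v.val/2 ∧ pv ≠ v.val ∧ pv < 2*g :=
    ⟨2*(v.val/2)+1 - v.val%2, by omega, by omega, by omega, by omega⟩
  refine ⟨((TT n g).flip u v).black ⊔
    (Trigraph.single u ⟨pu, hpun⟩ ⊔ Trigraph.single u v ⊔ Trigraph.single v ⟨pv, hpvn⟩),
    ⟨le_sup_left, sup_le le_sup_left (le_trans ?_ le_sup_right)⟩, ?_⟩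
  · rw [flip_gray]
    refine sup_le (sup_le ?_ ?_) ?_
    · refine le_trans (single_le ?_) le_sup_left
      rw [show (TT n g).gray = grayG n g from rfl, grayG_adj]
      refine ⟨?_, ?_⟩ <;> simp only [Fin.val_mk] <;> first
        | omega
        | (unfold gRel; omega)
    · refine le_trans (single_le ?_) le_sup_right
      rw [single_adj]
      exact ⟨Or.inl ⟨rfl, rfl⟩, fun h => hj (by rw [h])⟩
    · refine le_trans (single_le ?_) le_sup_left
      rw [show (TT n g).gray = grayG n g from rfl, grayG_adj]
      refine ⟨?_, ?_⟩ <;> simp only [Fin.val_mk] <;> first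
        | omega
        | (unfold gRel; omega)
  · apply hasInducedCopy_p4 _ ⟨pu, hpun⟩ u v ⟨pv, hpvn⟩
    all_goals
      simp only [SimpleGraph.sup_adj, flip_black, SimpleGraph.sdiff_adj,
        show (TT n g).black = blackG n g from rfl, blackG_adj, single_adj,
        ne_eq, Fin.ext_iff, Fin.val_mk, not_or, true_and, and_true, true_or, or_true,
        not_true, not_false_iff, false_and, and_false, false_or, or_false]
    all_goals unfold bRel
    all_goals omega

/-- Case: `u` is a pair vertex, `v` is a dominator, `uv` black. -/
lemma flip_pair_dom_black (hg : 2 ≤ g) (h2g : 2*g ≤ n) (h3g : n + 1 ≤ 3*g)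
    (u v : Fin n) (hu : u.val < 2*g) (hv : 2*g ≤ v.val)
    (hb : v.val - 2*g + u.val/2 < g) :
    ∃ R : SimpleGraph (Fin n), ((TT n g).flip u v).IsRealization R ∧
      Trigraph.HasInducedCopy (pathGraph 4) R := by
  have hun : u.val < n := u.isLt
  have hvn : v.val < n := v.isLt
  obtain ⟨pu, hpun, hpu1, hpu2, hpu3⟩ :
      ∃ pu, pu < n ∧ pu/2 = u.val/2 ∧ pu ≠ u.val ∧ pu < 2*g :=
    ⟨2*(u.val/2)+1 - u.val%2, by omega, by omega, by omega, by omega⟩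
  obtain ⟨m, hm1, hm2, hm3⟩ : ∃ m, m < g ∧ m ≠ u.val/2 ∧ v.val - 2*g + m < g := by
    rcases Nat.eq_zero_or_pos (u.val/2) with h | h
    · exact ⟨1, by omega⟩
    · exact ⟨0, by omega⟩
  have hyn : 2*m < n := by omega
  refine ⟨((TT n g).flip u v).black ⊔ Trigraph.single u ⟨pu, hpun⟩,
    ⟨le_sup_left, sup_le le_sup_left (le_trans ?_ le_sup_right)⟩, ?_⟩
  · rw [flip_gray]
    refine le_trans (single_le ?_) le_sup_left
    rw [show (TT n g).gray = grayG n g from rfl, grayG_adj]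
    refine ⟨?_, ?_⟩ <;> simp only [Fin.val_mk] <;> first
      | omega
      | (unfold gRel; omega)
  · apply hasInducedCopy_p4 _ u ⟨pu, hpun⟩ v ⟨2*m, hyn⟩
    all_goals
      simp only [SimpleGraph.sup_adj, flip_black, SimpleGraph.sdiff_adj,
        show (TT n g).black = blackG n g from rfl, blackG_adj, single_adj,
        ne_eq, Fin.ext_iff, Fin.val_mk, not_or, true_and, and_true, true_or, or_true,
        not_true, not_false_iff, false_and, and_false, false_or, or_false]
    all_goals unfold bRel
    all_goals omega

/-- Case: `u` is a pair vertex, `v` is a dominator, `uv` white. -/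
lemma flip_pair_dom_white (hg : 2 ≤ g) (h2g : 2*g ≤ n) (h3g : n + 1 ≤ 3*g)
    (u v : Fin n) (hu : u.val < 2*g) (hv : 2*g ≤ v.val)
    (hw : g ≤ v.val - 2*g + u.val/2) :
    ∃ R : SimpleGraph (Fin n), ((TT n g).flip u v).IsRealization R ∧
      Trigraph.HasInducedCopy (pathGraph 4) R := by
  have hun : u.val < n := u.isLt
  have hvn : v.val < n := v.isLt
  obtain ⟨pu, hpun, hpu1, hpu2, hpu3⟩ :
      ∃ pu, pu < n ∧ pu/2 = u.val/2 ∧ pu ≠ u.val ∧ pu < 2*g :=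
    ⟨2*(u.val/2)+1 - u.val%2, by omega, by omega, by omega, by omega⟩
  have hyn : 0 < n := by omega
  refine ⟨((TT n g).flip u v).black ⊔
    (Trigraph.single u ⟨pu, hpun⟩ ⊔ Trigraph.single u v),
    ⟨le_sup_left, sup_le le_sup_left (le_trans ?_ le_sup_right)⟩, ?_⟩
  · rw [flip_gray]
    refine sup_le ?_ ?_
    · refine le_trans (single_le ?_) le_sup_left
      rw [show (TT n g).gray = grayG n g from rfl, grayG_adj]
      refine ⟨?_, ?_⟩ <;> simp only [Fin.val_mk] <;> first
        | omega
        | (unfold gRel; omega)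
    · refine le_trans (single_le ?_) le_sup_right
      rw [single_adj]
      exact ⟨Or.inl ⟨rfl, rfl⟩, fun h => by have := congrArg Fin.val h; omega⟩
  · apply hasInducedCopy_p4 _ ⟨pu, hpun⟩ u v ⟨0, hyn⟩
    all_goals
      simp only [SimpleGraph.sup_adj, flip_black, SimpleGraph.sdiff_adj,
        show (TT n g).black = blackG n g from rfl, blackG_adj, single_adj,
        ne_eq, Fin.ext_iff, Fin.val_mk, not_or, true_and, and_true, true_or, or_true,
        not_true, not_false_iff, false_and, and_false, false_or, or_false]
    all_goals unfold bRel
    all_goals omega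

/-- Case: `u` and `v` are both dominators. -/
lemma flip_dom_dom (hg : 2 ≤ g) (h2g : 2*g ≤ n) (h3g : n + 1 ≤ 3*g)
    (u v : Fin n) (hu : 2*g ≤ u.val) (hv : 2*g ≤ v.val) (hlt : u.val < v.val) :
    ∃ R : SimpleGraph (Fin n), ((TT n g).flip u v).IsRealization R ∧
      Trigraph.HasInducedCopy (pathGraph 4) R := by
  have hun : u.val < n := u.isLt
  have hvn : v.val < n := v.isLt
  have hxn : 2*(g - (v.val - 2*g)) < n := by omega
  have hyn : 0 < n := by omega
  refine ⟨((TT n g).flip u v).black, ⟨le_refl _, le_sup_left⟩, ?_⟩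
  apply hasInducedCopy_p4 _ ⟨2*(g - (v.val - 2*g)), hxn⟩ u ⟨0, hyn⟩ v
  all_goals
    simp only [SimpleGraph.sup_adj, flip_black, SimpleGraph.sdiff_adj,
      show (TT n g).black = blackG n g from rfl, blackG_adj, single_adj,
      ne_eq, Fin.ext_iff, Fin.val_mk, not_or, true_and, and_true, true_or, or_true,
      not_true, not_false_iff, false_and, and_false, false_or, or_false]
  all_goals unfold bRel
  all_goals omega

/-- Any black or white edge of `TT n g`, when flipped, yields a realization
containing an induced `P4`. -/
lemma flip_any (hg : 2 ≤ g) (h2g : 2*g ≤ n) (h3g : n + 1 ≤ 3*g)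
    (u v : Fin n) (hne : u ≠ v) (hng : ¬ (TT n g).gray.Adj u v) :
    ∃ R : SimpleGraph (Fin n), ((TT n g).flip u v).IsRealization R ∧
      Trigraph.HasInducedCopy (pathGraph 4) R := by
  have hnev : u.val ≠ v.val := fun h => hne (Fin.ext h)
  by_cases hu : u.val < 2*g <;> by_cases hv : v.val < 2*g
  · have hj : u.val/2 ≠ v.val/2 := by
      intro h
      exact hng (grayG_adj.mpr ⟨hnev, hu, hv, h⟩)
    exact flip_pair_pair hg h2g u v hu hv hj
  · rcases lt_or_ge (v.val - 2*g + u.val/2) g with h | h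
    · exact flip_pair_dom_black hg h2g h3g u v hu (by omega) h
    · exact flip_pair_dom_white hg h2g h3g u v hu (by omega) h
  · rw [flip_comm]
    rcases lt_or_ge (u.val - 2*g + v.val/2) g with h | h
    · exact flip_pair_dom_black hg h2g h3g v u hv (by omega) h
    · exact flip_pair_dom_white hg h2g h3g v u hv (by omega) h
  · rcases lt_or_ge u.val v.val with h | h
    · exact flip_dom_dom hg h2g h3g u v (by omega) (by omega) h
    · rw [flip_comm]
      exact flip_dom_dom hg h2g h3g v u (by omega) (by omega) (by omega)

end Flips
lemma TT_isIndSat (hg : 2 ≤ g) (h2g : 2*g ≤ n) (h3g : n + 1 ≤ 3*g) :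
    Trigraph.IsIndSat (pathGraph 4) (TT n g) :=
  ⟨fun R hR => realization_p4_free R hR, fun u v hne hng => flip_any hg h2g h3g u v hne hng⟩

end IndSatP4

/-- For all `n ≥ 4`, there is a `P_4`-induced-saturated trigraph on
`n` vertices with exactly `⌈(n+1)/3⌉` gray edges; hence
`indsat(n, P_4) ≤ ⌈(n+1)/3⌉`. -/
theorem indsat_pathGraph_four_upper (n : ℕ) (hn : 4 ≤ n) :
    (∃ T : Trigraph (Fin n), Trigraph.IsIndSat (SimpleGraph.pathGraph 4) T ∧
        T.gray.edgeSet.ncard = (n + 1 + 2) / 3) ∧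
    Trigraph.indsat n (SimpleGraph.pathGraph 4) ≤ (((n + 1 + 2) / 3 : ℕ) : ℕ∞) := by
  set g : ℕ := (n + 1 + 2) / 3 with hgdef
  have hg : 2 ≤ g := by omega
  have h2g : 2*g ≤ n := by omega
  have h3g : n + 1 ≤ 3*g := by omega
  have hsat := IndSatP4.TT_isIndSat (n := n) hg h2g h3g
  have hcard := IndSatP4.gray_edgeSet n g h2g
  refine ⟨⟨IndSatP4.TT n g, hsat, hcard⟩, ?_⟩
  exact sInf_le ⟨IndSatP4.TT n g, hsat, by rw [hcard]⟩
end

section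
/- Let T be a P_4-induced-saturated trigraph whose vertex set V(T) is partitioned into nonempty sets V_1 and V_2 such that either every edge between V_1 and V_2 is white, or every edge between V_1 and V_2 is black. Then the induced subtrigraphs T[V_1] and T[V_2] are both P_4-induced-saturated. -/
open SimpleGraph

section Helpers

variable {V : Type*} {W : Type*}

/-- Transfer an induced embedding between graphs that agree on the relevant pairs. -/
def embTransfer {H : SimpleGraph W} {G G' : SimpleGraph V} (f : H ↪g G)
    (h : ∀ a b : W, G'.Adj (f a) (f b) ↔ G.Adj (f a) (f b)) : H ↪g G' :=
  ⟨f.toEmbedding, fun {a b} => (h a b).trans f.map_adj_iff⟩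

/-- Restrict an induced embedding whose range lies in `s`. -/
def embRestrict {H : SimpleGraph W} {G : SimpleGraph V} {s : Set V}
    (f : H ↪g G) (hf : ∀ a, f a ∈ s) : H ↪g G.induce s :=
  ⟨⟨fun a => ⟨f a, hf a⟩, fun a b h => f.injective (congrArg Subtype.val h)⟩,
    fun {a b} => f.map_adj_iff⟩

/-- Lift an induced embedding into a graph on a subtype. -/
def embLift {H : SimpleGraph W} {s : Set V} {G1 : SimpleGraph s} {G : SimpleGraph V}
    (f : H ↪g G1) (h : ∀ x y : s, G.Adj ↑x ↑y ↔ G1.Adj x y) : H ↪g G :=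
  ⟨⟨fun a => ↑(f a), fun a b hab => f.injective (Subtype.ext hab)⟩,
    fun {a b} => (h _ _).trans f.map_adj_iff⟩

lemma single_coe {s : Set V} (u v x y : s) :
    (Trigraph.single (u : V) (v : V)).Adj ↑x ↑y ↔ (Trigraph.single u v).Adj x y := by
  simp only [Trigraph.single, SimpleGraph.fromEdgeSet_adj, Set.mem_singleton_iff,
    Sym2.eq_iff, ne_eq, Subtype.ext_iff]

lemma single_mem {s : Set V} (u v : s) {a b : V}
    (h : (Trigraph.single (u : V) (v : V)).Adj a b) : a ∈ s ∧ b ∈ s := by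
  simp only [Trigraph.single, SimpleGraph.fromEdgeSet_adj, Set.mem_singleton_iff,
    Sym2.eq_iff] at h
  rcases h.1 with ⟨rfl, rfl⟩ | ⟨rfl, rfl⟩
  exacts [⟨u.2, v.2⟩, ⟨v.2, u.2⟩]

lemma aux_indsat (T : Trigraph V)
    (hT : Trigraph.IsIndSat (SimpleGraph.pathGraph 4) T) (s : Set V)
    (hcolor : (∀ u ∈ s, ∀ v ∉ s, T.White u v) ∨ (∀ u ∈ s, ∀ v ∉ s, T.black.Adj u v)) :
    Trigraph.IsIndSat (SimpleGraph.pathGraph 4) (T.induce s) := by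
  constructor
  · rintro R1 hR1 ⟨g⟩
    set R : SimpleGraph V := T.black ⊔ R1.map (Function.Embedding.subtype s) with hRdef
    have hagree : ∀ x y : s, R.Adj ↑x ↑y ↔ R1.Adj x y := by
      intro x y
      constructor
      · intro h
        rcases (SimpleGraph.sup_adj _ _ _ _).mp h with hb | hm
        · exact hR1.1 hb
        · obtain ⟨a, b, hab, ha, hb'⟩ := (SimpleGraph.map_adj _ _ _ _).mp hm
          obtain rfl : a = x := Subtype.ext ha
          obtain rfl : b = y := Subtype.ext hb'
          exact hab
      · intro h
        exact (SimpleGraph.sup_adj _ _ _ _).mpr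
          (Or.inr ((SimpleGraph.map_adj _ _ _ _).mpr ⟨x, y, h, rfl, rfl⟩))
    have hreal : T.IsRealization R := by
      refine ⟨le_sup_left, ?_⟩
      intro a b h
      rcases (SimpleGraph.sup_adj _ _ _ _).mp h with hb | hm
      · exact (SimpleGraph.sup_adj _ _ _ _).mpr (Or.inl hb)
      · obtain ⟨x, y, hxy, rfl, rfl⟩ := (SimpleGraph.map_adj _ _ _ _).mp hm
        exact hR1.2 hxy
    exact (hT.1 R hreal) ⟨embLift g hagree⟩
  · intro u v huv hgray
    have hne : (u : V) ≠ (v : V) := fun h => huv (Subtype.ext h)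
    have hgray' : ¬ T.gray.Adj ↑u ↑v := hgray
    obtain ⟨R, hR, ⟨f⟩⟩ := hT.2 ↑u ↑v hne hgray'
    have p01 : (SimpleGraph.pathGraph 4).Adj 0 1 := by rw [SimpleGraph.pathGraph_adj]; decide
    have p12 : (SimpleGraph.pathGraph 4).Adj 1 2 := by rw [SimpleGraph.pathGraph_adj]; decide
    have p23 : (SimpleGraph.pathGraph 4).Adj 2 3 := by rw [SimpleGraph.pathGraph_adj]; decide
    have np02 : ¬ (SimpleGraph.pathGraph 4).Adj 0 2 := by rw [SimpleGraph.pathGraph_adj]; decide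
    have np13 : ¬ (SimpleGraph.pathGraph 4).Adj 1 3 := by rw [SimpleGraph.pathGraph_adj]; decide
    have np03 : ¬ (SimpleGraph.pathGraph 4).Adj 0 3 := by rw [SimpleGraph.pathGraph_adj]; decide
    have r01 : R.Adj (f 0) (f 1) := f.map_adj_iff.mpr p01
    have r12 : R.Adj (f 1) (f 2) := f.map_adj_iff.mpr p12
    have r23 : R.Adj (f 2) (f 3) := f.map_adj_iff.mpr p23
    have nr02 : ¬ R.Adj (f 0) (f 2) := fun h => np02 (f.map_adj_iff.mp h)
    have nr13 : ¬ R.Adj (f 1) (f 3) := fun h => np13 (f.map_adj_iff.mp h)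
    have nr03 : ¬ R.Adj (f 0) (f 3) := fun h => np03 (f.map_adj_iff.mp h)
    have hside : ∀ i, f i ∈ s ↔ f 0 ∈ s := by
      rcases hcolor with hw | hb
      · have hcr : ∀ a b : V, R.Adj a b → a ∈ s → b ∈ s := by
          intro a b hab ha
          by_contra hbm
          have h2 := hR.2 hab
          simp only [Trigraph.flip, SimpleGraph.sup_adj, SimpleGraph.sdiff_adj] at h2
          rcases h2 with ⟨hbl, _⟩ | hg | hs1
          · exact (hw a ha b hbm).2.1 hbl
          · exact (hw a ha b hbm).2.2 hg
          · exact hbm (single_mem u v hs1).2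
        have i01 : f 0 ∈ s ↔ f 1 ∈ s := ⟨hcr _ _ r01, hcr _ _ r01.symm⟩
        have i12 : f 1 ∈ s ↔ f 2 ∈ s := ⟨hcr _ _ r12, hcr _ _ r12.symm⟩
        have i23 : f 2 ∈ s ↔ f 3 ∈ s := ⟨hcr _ _ r23, hcr _ _ r23.symm⟩
        intro i
        fin_cases i
        · exact Iff.rfl
        · exact i01.symm
        · exact (i01.trans i12).symm
        · exact (i01.trans (i12.trans i23)).symm
      · have hcr : ∀ a b : V, a ∈ s → b ∉ s → R.Adj a b := by
          intro a b ha hbm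
          apply hR.1
          simp only [Trigraph.flip, SimpleGraph.sdiff_adj]
          exact ⟨hb a ha b hbm, fun h1 => hbm (single_mem u v h1).2⟩
        have same : ∀ a b : V, ¬ R.Adj a b → (a ∈ s ↔ b ∈ s) := by
          intro a b hab
          constructor
          · intro ha; by_contra hbm; exact hab (hcr a b ha hbm)
          · intro hbm; by_contra ha; exact hab ((hcr b a hbm ha).symm)
        have i02 := same _ _ nr02
        have i13 := same _ _ nr13
        have i03 := same _ _ nr03
        intro i
        fin_cases i
        · exact Iff.rfl
        · exact i13.trans i03.symm
        · exact i02.symm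
        · exact i03.symm
    by_cases h0 : f 0 ∈ s
    · have hins : ∀ i, f i ∈ s := fun i => (hside i).mpr h0
      refine ⟨SimpleGraph.induce s R, ⟨?_, ?_⟩, ⟨embRestrict f hins⟩⟩
      · intro x y hxy
        simp only [Trigraph.flip, SimpleGraph.sdiff_adj] at hxy
        apply hR.1
        simp only [Trigraph.flip, SimpleGraph.sdiff_adj]
        exact ⟨hxy.1, fun h => hxy.2 ((single_coe u v x y).mp h)⟩
      · intro x y hxy
        have h2 := hR.2 (hxy : R.Adj ↑x ↑y)
        simp only [Trigraph.flip, SimpleGraph.sup_adj, SimpleGraph.sdiff_adj] at h2 ⊢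
        rcases h2 with ⟨hb1, hs1⟩ | hg1 | hs1
        · exact Or.inl ⟨hb1, fun h => hs1 ((single_coe u v x y).mpr h)⟩
        · exact Or.inr (Or.inl hg1)
        · exact Or.inr (Or.inr ((single_coe u v x y).mp hs1))
    · have houts : ∀ i, f i ∉ s := fun i hi => h0 ((hside i).mp hi)
      set R2 : SimpleGraph V :=
        T.black ⊔ (SimpleGraph.induce sᶜ R).map (Function.Embedding.subtype sᶜ) with hR2def
      have hblack_le : ∀ a b : V, a ∉ s → T.black.Adj a b → R.Adj a b := by
        intro a b ha hab
        apply hR.1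
        simp only [Trigraph.flip, SimpleGraph.sdiff_adj]
        exact ⟨hab, fun h1 => ha (single_mem u v h1).1⟩
      have hagree2 : ∀ a b : V, a ∉ s → b ∉ s → (R2.Adj a b ↔ R.Adj a b) := by
        intro a b ha hbm
        constructor
        · intro h
          rcases (SimpleGraph.sup_adj _ _ _ _).mp h with hbl | hm
          · exact hblack_le a b ha hbl
          · obtain ⟨x, y, hxy, rfl, rfl⟩ := (SimpleGraph.map_adj _ _ _ _).mp hm
            exact hxy
        · intro h
          exact (SimpleGraph.sup_adj _ _ _ _).mpr
            (Or.inr ((SimpleGraph.map_adj _ _ _ _).mpr ⟨⟨a, ha⟩, ⟨b, hbm⟩, h, rfl, rfl⟩))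
      have hreal2 : T.IsRealization R2 := by
        refine ⟨le_sup_left, ?_⟩
        intro a b h
        rcases (SimpleGraph.sup_adj _ _ _ _).mp h with hbl | hm
        · exact (SimpleGraph.sup_adj _ _ _ _).mpr (Or.inl hbl)
        · obtain ⟨x, y, hxy, rfl, rfl⟩ := (SimpleGraph.map_adj _ _ _ _).mp hm
          have h2 := hR.2 (hxy : R.Adj ↑x ↑y)
          simp only [Trigraph.flip, SimpleGraph.sup_adj, SimpleGraph.sdiff_adj] at h2
          rcases h2 with ⟨hb1, _⟩ | hg1 | hs1
          · exact (SimpleGraph.sup_adj _ _ _ _).mpr (Or.inl hb1)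
          · exact (SimpleGraph.sup_adj _ _ _ _).mpr (Or.inr hg1)
          · exact absurd (single_mem u v hs1).1 x.2
      exact absurd ⟨embTransfer f (fun a b => hagree2 _ _ (houts a) (houts b))⟩ (hT.1 R2 hreal2)

end Helpers

/-- If the vertex set of a `P_4`-induced-saturated trigraph `T` is
partitioned into nonempty sets `s` and `sᶜ` with all edges between them white, or
all edges between them black, then the induced subtrigraphs `T[s]` and `T[sᶜ]` are
both `P_4`-induced-saturated. -/
theorem isIndSat_of_split {V : Type*} (T : Trigraph V)
    (hT : Trigraph.IsIndSat (SimpleGraph.pathGraph 4) T)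
    (s : Set V) (hs : s.Nonempty) (hsc : sᶜ.Nonempty)
    (hcolor : (∀ u ∈ s, ∀ v ∈ sᶜ, T.White u v) ∨ (∀ u ∈ s, ∀ v ∈ sᶜ, T.black.Adj u v)) :
    Trigraph.IsIndSat (SimpleGraph.pathGraph 4) (T.induce s) ∧
    Trigraph.IsIndSat (SimpleGraph.pathGraph 4) (T.induce sᶜ) := by
  constructor
  · apply aux_indsat T hT s
    rcases hcolor with hw | hb
    · exact Or.inl (fun u hu v hv => hw u hu v hv)
    · exact Or.inr (fun u hu v hv => hb u hu v hv)
  · apply aux_indsat T hT sᶜ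
    rcases hcolor with hw | hb
    · left
      intro u hu v hv
      have hv' : v ∈ s := by simpa using hv
      obtain ⟨h1, h2, h3⟩ := hw v hv' u hu
      exact ⟨h1.symm, fun h => h2 h.symm, fun h => h3 h.symm⟩
    · right
      intro u hu v hv
      exact (hb v (by simpa using hv) u hu).symm
end

section
/- Let T be a P_4-induced-saturated trigraph on vertex set V and let S ⊆ V be such that no edge between S and V − S is gray and every pair of vertices of S has the same neighborhood in V − S (i.e., for all s, s' ∈ S and all w ∈ V − S, the edges sw and s'w have the same color). Then the induced subtrigraph T[S] is P_4-induced-saturated. -/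
open SimpleGraph

section Aux

open Trigraph

lemma Trigraph.single_adj {V : Type*} {u v x y : V} :
    (Trigraph.single u v).Adj x y ↔ ((x = u ∧ y = v) ∨ (x = v ∧ y = u)) ∧ x ≠ y := by
  simp only [Trigraph.single, SimpleGraph.fromEdgeSet_adj, Set.mem_singleton_iff, Sym2.eq_iff,
    ne_eq]

lemma Trigraph.flip_black {V : Type*} (T : Trigraph V) (u v : V) :
    (T.flip u v).black = T.black \ Trigraph.single u v := rfl

lemma Trigraph.flip_gray {V : Type*} (T : Trigraph V) (u v : V) :
    (T.flip u v).gray = T.gray ⊔ Trigraph.single u v := rfl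

lemma Trigraph.induce_black {V : Type*} (T : Trigraph V) (s : Set V) :
    (T.induce s).black = T.black.induce s := rfl

lemma Trigraph.induce_gray {V : Type*} (T : Trigraph V) (s : Set V) :
    (T.induce s).gray = T.gray.induce s := rfl

/-- decidable surrogate for adjacency in `pathGraph 4` -/
def adj4 (i k : Fin 4) : Prop := i.val + 1 = k.val ∨ k.val + 1 = i.val

set_option synthInstance.maxHeartbeats 400000 in
set_option synthInstance.maxSize 1024 in
lemma p4_bool_key : ∀ p : Fin 4 → Bool, ∀ a b j : Fin 4, p a = true → p b = true → a ≠ b →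
    p j = false → ∃ i k : Fin 4, p i = true ∧ p k = false ∧ ¬ (adj4 i k ↔ adj4 a k) := by
  unfold adj4
  decide

lemma adj4_iff {i k : Fin 4} : (SimpleGraph.pathGraph 4).Adj i k ↔ adj4 i k :=
  SimpleGraph.pathGraph_adj

end Aux

/-- If `S` is a set of vertices of a `P_4`-induced-saturated trigraph
`T` such that no edge between `S` and its complement is gray and any two vertices
of `S` have the same neighborhood outside `S` (the corresponding edges have the
same color), then `T[S]` is `P_4`-induced-saturated. -/
theorem isIndSat_induce_of_sameNeighborhood {V : Type*} (T : Trigraph V)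
    (hT : Trigraph.IsIndSat (SimpleGraph.pathGraph 4) T)
    (S : Set V)
    (hgray : ∀ u ∈ S, ∀ w ∉ S, ¬ T.gray.Adj u w)
    (hsame : ∀ s ∈ S, ∀ s' ∈ S, ∀ w ∉ S,
      (T.black.Adj s w ↔ T.black.Adj s' w) ∧ (T.gray.Adj s w ↔ T.gray.Adj s' w)) :
    Trigraph.IsIndSat (SimpleGraph.pathGraph 4) (T.induce S) := by
  classical
  obtain ⟨hT1, hT2⟩ := hT
  constructor
  · -- Part 1: no realization of `T[S]` has an induced `P₄`.
    rintro R' ⟨hR1, hR2⟩ ⟨f⟩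
    let rel : V → V → Prop := fun x y =>
      (∃ hx : x ∈ S, ∃ hy : y ∈ S, R'.Adj ⟨x, hx⟩ ⟨y, hy⟩) ∨ ((x ∉ S ∨ y ∉ S) ∧ T.black.Adj x y)
    have hsymm : Symmetric rel := by
      rintro x y (⟨hx, hy, h⟩ | ⟨hxy, h⟩)
      · exact Or.inl ⟨hy, hx, h.symm⟩
      · exact Or.inr ⟨hxy.symm, h.symm⟩
    have hloop : Irreflexive rel := by
      rintro x (⟨hx, hy, h⟩ | ⟨_, h⟩)
      · exact R'.loopless.irrefl _ h
      · exact T.black.loopless.irrefl _ h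
    let Rext : SimpleGraph V := ⟨rel, ⟨fun a b h => hsymm h⟩, ⟨hloop⟩⟩
    refine hT1 Rext ⟨?_, ?_⟩ ?_
    · intro x y h
      by_cases hx : x ∈ S
      · by_cases hy : y ∈ S
        · exact Or.inl ⟨hx, hy, hR1 h⟩
        · exact Or.inr ⟨Or.inr hy, h⟩
      · exact Or.inr ⟨Or.inl hx, h⟩
    · rintro x y (⟨hx, hy, h⟩ | ⟨_, h⟩)
      · exact hR2 h
      · exact Or.inl h
    · have emb : R' ↪g Rext :=
        { toFun := Subtype.val
          inj' := Subtype.val_injective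
          map_rel_iff' := by
            intro x y
            constructor
            · rintro (⟨hx, hy, h⟩ | ⟨hxy, -⟩)
              · exact h
              · rcases hxy with h' | h'
                · exact absurd x.2 h'
                · exact absurd y.2 h'
            · intro h
              exact Or.inl ⟨x.2, y.2, h⟩ }
      exact ⟨emb.comp f⟩
  · -- Part 2: flipping a black/white edge of `T[S]` creates an induced `P₄`.
    rintro u v huv hguv
    have huv' : (u : V) ≠ v := fun h => huv (Subtype.ext h)
    have hg' : ¬ T.gray.Adj (u : V) v := hguv
    obtain ⟨R, ⟨hR1, hR2⟩, ⟨f⟩⟩ := hT2 u v huv' hg'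
    rw [Trigraph.flip_black] at hR1
    have hR2' : ∀ {x y : V}, R.Adj x y →
        (T.black.Adj x y ∧ ¬ (Trigraph.single (u : V) v).Adj x y) ∨ T.gray.Adj x y ∨
          (Trigraph.single (u : V) v).Adj x y := by
      intro x y h
      have h2 := hR2 h
      rw [SimpleGraph.sup_adj, Trigraph.flip_black, Trigraph.flip_gray,
        SimpleGraph.sdiff_adj, SimpleGraph.sup_adj] at h2
      tauto
    have hns : ∀ w ∉ S, ∀ x, ¬ (Trigraph.single (u : V) v).Adj x w := by
      intro w hw x h
      rcases (Trigraph.single_adj.mp h).1 with ⟨-, rfl⟩ | ⟨-, rfl⟩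
      · exact hw v.2
      · exact hw u.2
    have hcross : ∀ s ∈ S, ∀ w ∉ S, (R.Adj s w ↔ T.black.Adj s w) := by
      intro s hs w hw
      constructor
      · intro h
        rcases hR2' h with ⟨hb, -⟩ | hgr | hsing
        · exact hb
        · exact absurd hgr (hgray s hs w hw)
        · exact absurd hsing (hns w hw s)
      · intro h
        exact hR1 ((SimpleGraph.sdiff_adj _ _ _ _).mpr ⟨h, hns w hw s⟩)
    -- the single edge graph on the subtype matches the one on `V`
    have hsing_iff : ∀ x y : S, (Trigraph.single (u : V) (v : V)).Adj ↑x ↑y ↔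
        (Trigraph.single u v).Adj x y := by
      intro x y
      rw [Trigraph.single_adj, Trigraph.single_adj]
      simp only [ne_eq, ← Subtype.ext_iff]
    -- `u` and `v` are in the range of `f`
    have hmem : ∀ z : V, z = u ∨ z = v → ∃ a, f a = z := by
      intro z hz
      by_contra hz'
      push_neg at hz'
      let Rfix : SimpleGraph V := (R \ Trigraph.single (u : V) v) ⊔ (T.black ⊓ Trigraph.single (u : V) v)
      have hfix : T.IsRealization Rfix := by
        constructor
        · intro x y h
          by_cases hxy : (Trigraph.single (u : V) v).Adj x y
          · exact Or.inr ⟨h, hxy⟩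
          · exact Or.inl ⟨hR1 ((SimpleGraph.sdiff_adj _ _ _ _).mpr ⟨h, hxy⟩), hxy⟩
        · rintro x y (⟨h, hxy⟩ | ⟨h, -⟩)
          · rcases hR2' h with ⟨hb, -⟩ | hgr | hsing
            · exact Or.inl hb
            · exact Or.inr hgr
            · exact absurd hsing hxy
          · exact Or.inl h
      refine hT1 Rfix hfix ⟨?_⟩
      have hnsing : ∀ i j : Fin 4, ¬ (Trigraph.single (u : V) v).Adj (f i) (f j) := by
        intro i j h
        rcases (Trigraph.single_adj.mp h).1 with ⟨h1, h2⟩ | ⟨h1, h2⟩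
        · rcases hz with rfl | rfl
          · exact hz' i h1
          · exact hz' j h2
        · rcases hz with rfl | rfl
          · exact hz' j h2
          · exact hz' i h1
      exact
        { toFun := f
          inj' := f.injective
          map_rel_iff' := by
            intro i j
            show (Rfix.Adj (f i) (f j)) ↔ _
            rw [show Rfix.Adj (f i) (f j) ↔
              (R.Adj (f i) (f j) ∧ ¬ (Trigraph.single (u : V) v).Adj (f i) (f j)) ∨
              (T.black.Adj (f i) (f j) ∧ (Trigraph.single (u : V) v).Adj (f i) (f j)) from Iff.rfl]
            have := hnsing i j
            rw [← f.map_rel_iff]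
            tauto }
    obtain ⟨a, ha⟩ := hmem u (Or.inl rfl)
    obtain ⟨b, hb⟩ := hmem v (Or.inr rfl)
    have hab : a ≠ b := by
      intro h
      exact huv' (by rw [← ha, ← hb, h])
    -- every vertex of the copy lies in `S`
    have hRb : ∀ i k : Fin 4, f i ∈ S → f k ∉ S →
        ((SimpleGraph.pathGraph 4).Adj i k ↔ (SimpleGraph.pathGraph 4).Adj a k) := by
      intro i k hi hk
      calc (SimpleGraph.pathGraph 4).Adj i k ↔ R.Adj (f i) (f k) := f.map_rel_iff.symm
        _ ↔ T.black.Adj (f i) (f k) := hcross (f i) hi (f k) hk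
        _ ↔ T.black.Adj (f a) (f k) := by rw [ha]; exact (hsame (f i) hi ↑u u.2 (f k) hk).1
        _ ↔ R.Adj (f a) (f k) := by rw [ha]; exact (hcross ↑u u.2 (f k) hk).symm
        _ ↔ (SimpleGraph.pathGraph 4).Adj a k := f.map_rel_iff
    have hall : ∀ i, f i ∈ S := by
      intro i
      by_contra hi
      obtain ⟨i', k, hi', hk, hne⟩ := p4_bool_key (fun j => decide (f j ∈ S)) a b i
        (by simp only [decide_eq_true_eq]; rw [ha]; exact u.2)
        (by simp only [decide_eq_true_eq]; rw [hb]; exact v.2)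
        hab (by simpa using hi)
      simp only [decide_eq_true_eq] at hi'
      simp only [decide_eq_false_iff_not] at hk
      exact hne (by rw [← adj4_iff, ← adj4_iff]; exact hRb i' k hi' hk)
    -- the restriction of `R` to `S` works
    refine ⟨R.induce S, ⟨?_, ?_⟩, ?_⟩
    · intro x y h
      rw [Trigraph.flip_black, Trigraph.induce_black, SimpleGraph.sdiff_adj] at h
      exact hR1 ((SimpleGraph.sdiff_adj _ _ _ _).mpr ⟨h.1, fun hs => h.2 ((hsing_iff x y).mp hs)⟩)
    · intro x y h
      rw [SimpleGraph.sup_adj, Trigraph.flip_black, Trigraph.flip_gray,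
        SimpleGraph.sdiff_adj, SimpleGraph.sup_adj, Trigraph.induce_black, Trigraph.induce_gray]
      have h' : R.Adj (x : V) y := h
      rcases hR2' h' with ⟨hbl, hsing⟩ | hgr | hsing
      · exact Or.inl ⟨hbl, fun hs => hsing ((hsing_iff x y).mpr hs)⟩
      · exact Or.inr (Or.inl hgr)
      · exact Or.inr (Or.inr ((hsing_iff x y).mp hsing))
    · refine ⟨{ toFun := fun i => ⟨f i, hall i⟩
                inj' := fun i j h => f.injective (congrArg Subtype.val h)
                map_rel_iff' := ?_ }⟩
      intro i j
      exact f.map_rel_iff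
end

section
/- Let T be a P_4-induced-saturated trigraph and let C = {u, v_1, …, v_{k−1}} with k ≥ 2 be the vertex set of a gray star in T with center u (i.e., the edges uv_i are gray and C is a gray component). Then V(T) − C can be partitioned into sets X, Y, Z such that: (1) for every x ∈ X, the edges xu and xv_i are black for all i; (2) for every y ∈ Y, the edges yu and yv_i are white for all i; and (3) either all edges v_iv_j (i ≠ j) and all edges v_iz (z ∈ Z) are white while all edges uz (z ∈ Z) are black, or all edges v_iv_j (i ≠ j) and all edges v_iz (z ∈ Z) are black while all edges uz (z ∈ Z) are white. -/
open SimpleGraph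

/-! ### Auxiliary lemmas -/

lemma white_symm_aux {V : Type*} (T : Trigraph V) {a b : V} (h : T.White a b) : T.White b a :=
  ⟨h.1.symm, fun hb => h.2.1 hb.symm, fun hg => h.2.2 hg.symm⟩

lemma realization_aux {V : Type*} (T : Trigraph V) (E : Set (Sym2 V)) (hE : E ⊆ T.gray.edgeSet) :
    T.IsRealization (T.black ⊔ SimpleGraph.fromEdgeSet E) :=
  ⟨le_sup_left, sup_le_sup le_rfl
    ((SimpleGraph.fromEdgeSet_mono hE).trans (by rw [SimpleGraph.fromEdgeSet_edgeSet]))⟩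

lemma p4_copy {V : Type*} (G : SimpleGraph V) (a b c d : V)
    (hac : a ≠ c) (had : a ≠ d) (hbd : b ≠ d)
    (hab : G.Adj a b) (hbc : G.Adj b c) (hcd : G.Adj c d)
    (nac : ¬ G.Adj a c) (nad : ¬ G.Adj a d) (nbd : ¬ G.Adj b d) :
    Trigraph.HasInducedCopy (SimpleGraph.pathGraph 4) G := by
  have hba := hab.symm
  have hcb := hbc.symm
  have hdc := hcd.symm
  have nca : ¬ G.Adj c a := fun h => nac h.symm
  have nda : ¬ G.Adj d a := fun h => nad h.symm
  have ndb : ¬ G.Adj d b := fun h => nbd h.symm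
  refine ⟨⟨⟨![a,b,c,d], ?_⟩, ?_⟩⟩
  · intro i j
    fin_cases i <;> fin_cases j <;>
      simp_all [hab.ne, hbc.ne, hcd.ne, hac, had, hbd, (hab.ne).symm, (hbc.ne).symm,
        (hcd.ne).symm, hac.symm, had.symm, hbd.symm]
  · intro i j
    change G.Adj (![a,b,c,d] i) (![a,b,c,d] j) ↔ _
    fin_cases i <;> fin_cases j <;>
      simp_all [pathGraph_adj, G.irrefl] <;> decide

lemma key_aux {V : Type*} (T : Trigraph V)
    (hT : ∀ R : SimpleGraph V, T.IsRealization R → ¬ Trigraph.HasInducedCopy (SimpleGraph.pathGraph 4) R)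
    (E : Set (Sym2 V)) (hE : E ⊆ T.gray.edgeSet) (a b c d : V)
    (h1 : a ≠ c) (h2 : a ≠ d) (h3 : b ≠ d)
    (hab : T.black.Adj a b ∨ (s(a,b) ∈ E ∧ a ≠ b))
    (hbc : T.black.Adj b c ∨ (s(b,c) ∈ E ∧ b ≠ c))
    (hcd : T.black.Adj c d ∨ (s(c,d) ∈ E ∧ c ≠ d))
    (nac : ¬ (T.black.Adj a c ∨ (s(a,c) ∈ E ∧ a ≠ c)))
    (nad : ¬ (T.black.Adj a d ∨ (s(a,d) ∈ E ∧ a ≠ d)))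
    (nbd : ¬ (T.black.Adj b d ∨ (s(b,d) ∈ E ∧ b ≠ d))) : False := by
  have hadj : ∀ x y : V, (T.black ⊔ SimpleGraph.fromEdgeSet E).Adj x y ↔
      (T.black.Adj x y ∨ (s(x,y) ∈ E ∧ x ≠ y)) := by
    intro x y; simp [SimpleGraph.fromEdgeSet_adj]
  exact hT _ (realization_aux T E hE)
    (p4_copy _ a b c d h1 h2 h3 ((hadj a b).mpr hab) ((hadj b c).mpr hbc) ((hadj c d).mpr hcd)
      (fun h => nac ((hadj a c).mp h)) (fun h => nad ((hadj a d).mp h))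
      (fun h => nbd ((hadj b d).mp h)))
set_option maxHeartbeats 1600000 in
/-- If `C` is the vertex set of a gray star (with `|C| = k ≥ 2`)
with center `u` forming a gray component of a `P_4`-induced-saturated trigraph `T`,
then the remaining vertices can be partitioned into `X`, `Y`, `Z` with: every
vertex of `X` joined by black edges to all of `C`; every vertex of `Y` joined by
white edges to all of `C`; and either all edges among the leaves and all edges
from `Z` to the leaves are white while all edges from `Z` to `u` are black, or
all edges among the leaves and from `Z` to the leaves are black while all edges
from `Z` to `u` are white. -/
theorem gray_star_partition {V : Type*} (T : Trigraph V)
    (hT : Trigraph.IsIndSat (SimpleGraph.pathGraph 4) T)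
    (C : Set V) (u : V) (huC : u ∈ C) (hC2 : C.Nontrivial)
    (hstar : ∀ v ∈ C, v ≠ u → T.gray.Adj u v)
    (hleaves : ∀ v ∈ C, ∀ w ∈ C, v ≠ u → w ≠ u → ¬ T.gray.Adj v w)
    (hcomp : ∀ v ∈ C, ∀ w : V, T.gray.Adj v w → w ∈ C) :
    ∃ X Y Z : Set V,
      X ∪ Y ∪ Z = Cᶜ ∧ Disjoint X Y ∧ Disjoint X Z ∧ Disjoint Y Z ∧
      (∀ x ∈ X, ∀ c ∈ C, T.black.Adj x c) ∧
      (∀ y ∈ Y, ∀ c ∈ C, T.White y c) ∧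
      (((∀ v ∈ C, ∀ w ∈ C, v ≠ u → w ≠ u → v ≠ w → T.White v w) ∧
        (∀ z ∈ Z, ∀ v ∈ C, v ≠ u → T.White z v) ∧
        (∀ z ∈ Z, T.black.Adj u z)) ∨
       ((∀ v ∈ C, ∀ w ∈ C, v ≠ u → w ≠ u → v ≠ w → T.black.Adj v w) ∧
        (∀ z ∈ Z, ∀ v ∈ C, v ≠ u → T.black.Adj z v) ∧
        (∀ z ∈ Z, T.White u z))) := by
  classical
  have key := key_aux T hT.1
  -- basic facts
  have huvne : ∀ {w : V}, w ∉ C → ∀ {c : V}, c ∈ C → w ≠ c := by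
    intro w hw c hc h; exact hw (h ▸ hc)
  have hnogray : ∀ {w : V}, w ∉ C → ∀ {c : V}, c ∈ C → ¬ T.gray.Adj w c := by
    intro w hw c hc hg; exact hw (hcomp c hc w hg.symm)
  have dich : ∀ {w : V}, w ∉ C → ∀ {c : V}, c ∈ C → T.black.Adj w c ∨ T.White w c := by
    intro w hw c hc
    by_cases hb : T.black.Adj w c
    · exact Or.inl hb
    · exact Or.inr ⟨huvne hw hc, hb, hnogray hw hc⟩
  have dichL : ∀ {v : V}, v ∈ C → v ≠ u → ∀ {w : V}, w ∈ C → w ≠ u → v ≠ w →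
      T.black.Adj v w ∨ T.White v w := by
    intro v hv hvu w hw hwu hvw
    by_cases hb : T.black.Adj v w
    · exact Or.inl hb
    · exact Or.inr ⟨hvw, hb, hleaves v hv w hw hvu hwu⟩
  have hnbu : ∀ {v : V}, v ∈ C → v ≠ u → ¬ T.black.Adj u v := by
    intro v hv hvu hb; exact T.disjoint u v ⟨hb, hstar v hv hvu⟩
  have hnbu' : ∀ {v : V}, v ∈ C → v ≠ u → ¬ T.black.Adj v u := by
    intro v hv hvu hb; exact hnbu hv hvu hb.symm
  -- Claim A : an outside vertex is uniform on the leaves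
  have claimA : ∀ w ∉ C, ∀ v ∈ C, v ≠ u → ∀ v' ∈ C, v' ≠ u →
      T.black.Adj w v → T.black.Adj w v' := by
    intro w hw v hv hvu v' hv' hv'u hbwv
    by_cases hvv' : v = v'
    · exact hvv' ▸ hbwv
    by_contra hnb
    have hwv' : T.White w v' := (dich hw hv').resolve_left hnb
    have hwu : w ≠ u := huvne hw huC
    have hwv : w ≠ v := huvne hw hv
    have hwv'2 : w ≠ v' := huvne hw hv'
    have hgv : T.gray.Adj u v := hstar v hv hvu
    have hgv' : T.gray.Adj u v' := hstar v' hv' hv'u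
    have hnbv : ¬ T.black.Adj v u := hnbu' hv hvu
    have hnbv' : ¬ T.black.Adj u v' := hnbu hv' hv'u
    have hvwB : T.black.Adj v w := hbwv.symm
    have hnbwv' : ¬ T.black.Adj w v' := hwv'.2.1
    rcases dichL hv hvu hv' hv'u hvv' with hbvv' | hwvv'
    · -- v v' black
      rcases dich hw huC with hbwu | hwwu
      · -- w u black : P4 = u - w - v - v' with E = ∅
        have hbuw : T.black.Adj u w := hbwu.symm
        have h1 : ¬ T.black.Adj u v := fun h => hnbv h.symm
        clear hT hC2 hcomp hleaves hstar huvne hnogray dich dichL hnbu hnbu'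
        refine key ∅ (Set.empty_subset _) u w v v' (Ne.symm hvu) (Ne.symm hv'u)
          hwv'2 ?_ ?_ ?_ ?_ ?_ ?_ <;>
          simp only [Set.mem_empty_iff_false, false_and, or_false] <;> tauto
      · -- w u white : P4 = w - v - v' - u with E = {s(u,v')}
        have hnbwu : ¬ T.black.Adj w u := hwwu.2.1
        have hsub : ({s(u,v')} : Set (Sym2 V)) ⊆ T.gray.edgeSet := by
          simp only [Set.singleton_subset_iff, SimpleGraph.mem_edgeSet]; exact hgv'
        clear hT hC2 hcomp hleaves hstar huvne hnogray dich dichL hnbu hnbu'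
        refine key {s(u,v')} hsub w v v' u hwv'2 hwu hvu ?_ ?_ ?_ ?_ ?_ ?_ <;>
          simp only [Set.mem_singleton_iff, Sym2.eq_iff] <;> tauto
    · -- v v' white
      have hnbvv' : ¬ T.black.Adj v v' := hwvv'.2.1
      rcases dich hw huC with hbwu | hwwu
      · -- w u black : P4 = v - w - u - v' with E = {s(u,v')}
        have hsub : ({s(u,v')} : Set (Sym2 V)) ⊆ T.gray.edgeSet := by
          simp only [Set.singleton_subset_iff, SimpleGraph.mem_edgeSet]; exact hgv'
        clear hT hC2 hcomp hleaves hstar huvne hnogray dich dichL hnbu hnbu'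
        refine key {s(u,v')} hsub v w u v' hvu hvv' hwv'2 ?_ ?_ ?_ ?_ ?_ ?_ <;>
          simp only [Set.mem_singleton_iff, Sym2.eq_iff] <;> tauto
      · -- w u white : P4 = w - v - u - v' with E = {s(u,v), s(u,v')}
        have hnbwu : ¬ T.black.Adj w u := hwwu.2.1
        have hsub : ({s(u,v), s(u,v')} : Set (Sym2 V)) ⊆ T.gray.edgeSet := by
          simp only [Set.insert_subset_iff, Set.singleton_subset_iff,
            SimpleGraph.mem_edgeSet]
          exact ⟨hgv, hgv'⟩
        clear hT hC2 hcomp hleaves hstar huvne hnogray dich dichL hnbu hnbu'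
        refine key {s(u,v), s(u,v')} hsub w v u v' hwu hwv'2 hvv' ?_ ?_ ?_ ?_ ?_ ?_ <;>
          simp only [Set.mem_insert_iff, Set.mem_singleton_iff, Sym2.eq_iff] <;> tauto
  -- leaf_not_mixed : cannot have a black and a white leaf edge sharing a vertex
  have lnm : ∀ v ∈ C, v ≠ u → ∀ v' ∈ C, v' ≠ u → ∀ v'' ∈ C, v'' ≠ u →
      v ≠ v' → v ≠ v'' → v' ≠ v'' →
      T.black.Adj v v' → T.White v v'' → False := by
    intro v hv hvu v' hv' hv'u v'' hv'' hv''u h12 h13 h23 hb12 hw13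
    have hg1 : T.gray.Adj u v := hstar v hv hvu
    have hg3 : T.gray.Adj u v'' := hstar v'' hv'' hv''u
    have hnb1 : ¬ T.black.Adj v u := hnbu' hv hvu
    have hnb2 : ¬ T.black.Adj v' u := hnbu' hv' hv'u
    have hnb13 : ¬ T.black.Adj v v'' := hw13.2.1
    have hb23 : T.black.Adj v' v'' := by
      by_contra hnb23
      have hw23 : T.White v' v'' := (dichL hv' hv'u hv'' hv''u h23).resolve_left hnb23
      have hnb23' : ¬ T.black.Adj v' v'' := hw23.2.1
      have hb21 : T.black.Adj v' v := hb12.symm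
      have hsub : ({s(u,v), s(u,v'')} : Set (Sym2 V)) ⊆ T.gray.edgeSet := by
        simp only [Set.insert_subset_iff, Set.singleton_subset_iff, SimpleGraph.mem_edgeSet]
        exact ⟨hg1, hg3⟩
      -- P4 = v' - v - u - v''  with E = {s(u,v), s(u,v'')}
      clear hT hC2 hcomp hleaves hstar huvne hnogray dich dichL hnbu hnbu' claimA
      refine key {s(u,v), s(u,v'')} hsub v' v u v'' hv'u h23 h13 ?_ ?_ ?_ ?_ ?_ ?_ <;>
        simp only [Set.mem_insert_iff, Set.mem_singleton_iff, Sym2.eq_iff] <;> tauto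
    -- P4 = v - v' - v'' - u  with E = {s(u,v'')}
    have hsub : ({s(u,v'')} : Set (Sym2 V)) ⊆ T.gray.edgeSet := by
      simp only [Set.singleton_subset_iff, SimpleGraph.mem_edgeSet]; exact hg3
    clear hT hC2 hcomp hleaves hstar huvne hnogray dich dichL hnbu hnbu' claimA
    refine key {s(u,v'')} hsub v v' v'' u h13 hvu hv'u ?_ ?_ ?_ ?_ ?_ ?_ <;>
      simp only [Set.mem_singleton_iff, Sym2.eq_iff] <;> tauto
  -- a step lemma: black propagates along leaves
  have step : ∀ p ∈ C, p ≠ u → ∀ q ∈ C, q ≠ u → ∀ r ∈ C, r ≠ u →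
      p ≠ q → p ≠ r → q ≠ r → T.black.Adj p q → T.black.Adj p r := by
    intro p hp hpu q hq hqu r hr hru hpq hpr hqr hb
    by_contra hnb
    exact lnm p hp hpu q hq hqu r hr hru hpq hpr hqr hb
      ((dichL hp hpu hr hru hpr).resolve_left hnb)
  -- leaf uniformity (global)
  have leafU : (∀ v ∈ C, ∀ w ∈ C, v ≠ u → w ≠ u → v ≠ w → T.White v w) ∨
      (∀ v ∈ C, ∀ w ∈ C, v ≠ u → w ≠ u → v ≠ w → T.black.Adj v w) := by
    by_cases hall : ∀ v ∈ C, ∀ w ∈ C, v ≠ u → w ≠ u → v ≠ w → T.White v w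
    · exact Or.inl hall
    · push_neg at hall
      obtain ⟨v, hv, w, hw, hvu, hwu, hvw, hnw⟩ := hall
      have hbvw : T.black.Adj v w := (dichL hv hvu hw hwu hvw).resolve_right hnw
      refine Or.inr ?_
      intro a ha b hb hau hbu hab
      by_cases hav : a = v
      · subst hav
        by_cases hbw : b = w
        · exact hbw ▸ hbvw
        · exact step a ha hau w hw hwu b hb hbu hvw hab (fun h => hbw h.symm) hbvw
      · by_cases haw : a = w
        · subst haw
          by_cases hbv : b = v
          · exact hbv ▸ hbvw.symm
          · exact step a ha hau v hv hvu b hb hbu (Ne.symm hvw) hab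
              (fun h => hbv h.symm) hbvw.symm
        · have hbva : T.black.Adj v a :=
            step v hv hvu w hw hwu a ha hau hvw (fun h => hav h.symm)
              (fun h => haw h.symm) hbvw
          by_cases hbv : b = v
          · exact hbv ▸ hbva.symm
          · exact step a ha hau v hv hvu b hb hbu hav hab (fun h => hbv h.symm) hbva.symm
  -- Z-type characterization
  have ztype : ∀ w ∉ C, ¬ (∀ c ∈ C, T.black.Adj w c) → ¬ (∀ c ∈ C, T.White w c) →
      (T.black.Adj w u ∧ ∀ v ∈ C, v ≠ u → T.White w v) ∨
      (T.White w u ∧ ∀ v ∈ C, v ≠ u → T.black.Adj w v) := by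
    intro w hw hnB hnW
    rcases dich hw huC with hbu | hwu
    · left; refine ⟨hbu, ?_⟩
      push_neg at hnB
      obtain ⟨c, hc, hnbc⟩ := hnB
      have hcu : c ≠ u := fun h => hnbc (h ▸ hbu)
      intro v hv hvu
      by_contra hnbv
      have hbv : T.black.Adj w v := (dich hw hv).resolve_right hnbv
      exact hnbc (claimA w hw v hv hvu c hc hcu hbv)
    · right; refine ⟨hwu, ?_⟩
      push_neg at hnW
      obtain ⟨c, hc, hnwc⟩ := hnW
      have hbc : T.black.Adj w c := (dich hw hc).resolve_right hnwc
      have hcu : c ≠ u := fun h => hwu.2.1 (h ▸ hbc)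
      intro v hv hvu
      exact claimA w hw c hc hcu v hv hvu hbc
  -- B2 : a (black-to-u, white-to-leaves) vertex forces white leaf edges
  have B2 : ∀ z ∉ C, T.black.Adj z u → (∀ v ∈ C, v ≠ u → T.White z v) →
      ∀ v ∈ C, v ≠ u → ∀ v' ∈ C, v' ≠ u → v ≠ v' → ¬ T.black.Adj v v' := by
    intro z hz hbzu hwz v hv hvu v' hv' hv'u hvv' hb
    have hzu : z ≠ u := huvne hz huC
    have hzv : z ≠ v := huvne hz hv
    have hzv' : z ≠ v' := huvne hz hv'
    have hn1 : ¬ T.black.Adj z v := (hwz v hv hvu).2.1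
    have hn2 : ¬ T.black.Adj z v' := (hwz v' hv' hv'u).2.1
    have hn3 : ¬ T.black.Adj u v' := hnbu hv' hv'u
    have hg : T.gray.Adj u v := hstar v hv hvu
    have hsub : ({s(u,v)} : Set (Sym2 V)) ⊆ T.gray.edgeSet := by
      simp only [Set.singleton_subset_iff, SimpleGraph.mem_edgeSet]; exact hg
    have hvu' : u ≠ v := Ne.symm hvu
    have hvv'' : v' ≠ v := Ne.symm hvv'
    have huv' : u ≠ v' := Ne.symm hv'u
    clear hT hC2 hcomp hleaves hstar huvne hnogray dich dichL hnbu hnbu' claimA lnm step leafU ztype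
    refine key {s(u,v)} hsub z u v v' hzv hzv' huv' ?_ ?_ ?_ ?_ ?_ ?_ <;>
      simp only [Set.mem_singleton_iff, Sym2.eq_iff] <;> tauto
  -- B3 : a (white-to-u, black-to-leaves) vertex forces black leaf edges
  have B3 : ∀ z ∉ C, T.White z u → (∀ v ∈ C, v ≠ u → T.black.Adj z v) →
      ∀ v ∈ C, v ≠ u → ∀ v' ∈ C, v' ≠ u → v ≠ v' → ¬ T.White v v' := by
    intro z hz hwzu hbz v hv hvu v' hv' hv'u hvv' hw
    have hzu : z ≠ u := huvne hz huC
    have hzv : z ≠ v := huvne hz hv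
    have hb1 : T.black.Adj v' z := (hbz v' hv' hv'u).symm
    have hb2 : T.black.Adj z v := hbz v hv hvu
    have hg : T.gray.Adj u v := hstar v hv hvu
    have hn1 : ¬ T.black.Adj v' v := fun h => hw.2.1 h.symm
    have hn2 : ¬ T.black.Adj v' u := hnbu' hv' hv'u
    have hn3 : ¬ T.black.Adj z u := hwzu.2.1
    have hv'v : v' ≠ v := Ne.symm hvv'
    have hsub : ({s(u,v)} : Set (Sym2 V)) ⊆ T.gray.edgeSet := by
      simp only [Set.singleton_subset_iff, SimpleGraph.mem_edgeSet]; exact hg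
    clear hT hC2 hcomp hleaves hstar huvne hnogray dich dichL hnbu hnbu' claimA lnm step leafU ztype B2
    refine key {s(u,v)} hsub v' z v u hv'v hv'u hzu ?_ ?_ ?_ ?_ ?_ ?_ <;>
      simp only [Set.mem_singleton_iff, Sym2.eq_iff] <;> tauto
  -- B4 : the two mixed types cannot coexist
  have B4 : ∀ z ∉ C, T.black.Adj z u → (∀ v ∈ C, v ≠ u → T.White z v) →
      ∀ z' ∉ C, T.White z' u → (∀ v ∈ C, v ≠ u → T.black.Adj z' v) → False := by
    intro z hz hbzu hwz z' hz' hwz'u hbz'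
    obtain ⟨v, hv, hvu⟩ := hC2.exists_ne u
    have hzz' : z ≠ z' := fun h => hwz'u.2.1 (h ▸ hbzu)
    have hzu : z ≠ u := huvne hz huC
    have hz'u : z' ≠ u := huvne hz' huC
    have hzv : z ≠ v := huvne hz hv
    have hz'v : z' ≠ v := huvne hz' hv
    have hwzv : ¬ T.black.Adj z v := (hwz v hv hvu).2.1
    have hbz'v : T.black.Adj z' v := hbz' v hv hvu
    have hnbuz' : ¬ T.black.Adj u z' := fun h => hwz'u.2.1 h.symm
    have hnbuv : ¬ T.black.Adj u v := hnbu hv hvu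
    have hnbvu : ¬ T.black.Adj v u := hnbu' hv hvu
    have hnbz'u : ¬ T.black.Adj z' u := hwz'u.2.1
    have hbuz : T.black.Adj u z := hbzu.symm
    have hbvz' : T.black.Adj v z' := hbz'v.symm
    have huz' : u ≠ z' := Ne.symm hz'u
    have huv : u ≠ v := Ne.symm hvu
    have huz : u ≠ z := Ne.symm hzu
    have hvz : v ≠ z := Ne.symm hzv
    have hvz' : v ≠ z' := Ne.symm hz'v
    by_cases hg : T.gray.Adj z z'
    · -- P4 = u - z - z' - v with E = {s(z,z')}
      have hsub : ({s(z,z')} : Set (Sym2 V)) ⊆ T.gray.edgeSet := by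
        simp only [Set.singleton_subset_iff, SimpleGraph.mem_edgeSet]; exact hg
      have hnbzv : ¬ T.black.Adj z v := hwzv
      clear hT hC2 hcomp hleaves hstar huvne hnogray dich dichL hnbu hnbu' claimA lnm step leafU ztype B2 B3
      refine key {s(z,z')} hsub u z z' v huz' huv hzv ?_ ?_ ?_ ?_ ?_ ?_ <;>
        simp only [Set.mem_singleton_iff, Sym2.eq_iff] <;> tauto
    · by_cases hb : T.black.Adj z z'
      · -- P4 = v - z' - z - u with E = ∅
        have hbz'z : T.black.Adj z' z := hb.symm
        have hnbvz : ¬ T.black.Adj v z := fun h => hwzv h.symm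
        clear hT hC2 hcomp hleaves hstar huvne hnogray dich dichL hnbu hnbu' claimA lnm step leafU ztype B2 B3
        refine key ∅ (Set.empty_subset _) v z' z u hvz hvu hz'u ?_ ?_ ?_ ?_ ?_ ?_ <;>
          simp only [Set.mem_empty_iff_false, false_and, or_false] <;> tauto
      · -- z z' white : P4 = z - u - v - z' with E = {s(u,v)}
        have hg2 : T.gray.Adj u v := hstar v hv hvu
        have hsub : ({s(u,v)} : Set (Sym2 V)) ⊆ T.gray.edgeSet := by
          simp only [Set.singleton_subset_iff, SimpleGraph.mem_edgeSet]; exact hg2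
        clear hT hC2 hcomp hleaves hstar huvne hnogray dich dichL hnbu hnbu' claimA lnm step leafU ztype B2 B3
        refine key {s(u,v)} hsub z u v z' hzv hzz' huz' ?_ ?_ ?_ ?_ ?_ ?_ <;>
          simp only [Set.mem_singleton_iff, Sym2.eq_iff] <;> tauto
  -- assemble the partition
  refine ⟨{w | w ∉ C ∧ ∀ c ∈ C, T.black.Adj w c},
          {w | w ∉ C ∧ ∀ c ∈ C, T.White w c},
          {w | w ∉ C ∧ ¬ (∀ c ∈ C, T.black.Adj w c) ∧ ¬ (∀ c ∈ C, T.White w c)},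
          ?_, ?_, ?_, ?_, ?_, ?_, ?_⟩
  · ext w
    simp only [Set.mem_union, Set.mem_setOf_eq, Set.mem_compl_iff]
    constructor
    · tauto
    · intro h; tauto
  · rw [Set.disjoint_left]
    rintro w ⟨hw, hB⟩ ⟨-, hW⟩
    exact (hW u huC).2.1 (hB u huC)
  · rw [Set.disjoint_left]
    rintro w ⟨hw, hB⟩ ⟨-, hnB, -⟩
    exact hnB hB
  · rw [Set.disjoint_left]
    rintro w ⟨hw, hW⟩ ⟨-, -, hnW⟩
    exact hnW hW
  · rintro x ⟨-, hB⟩ c hc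
    exact hB c hc
  · rintro y ⟨-, hW⟩ c hc
    exact hW c hc
  · by_cases hEx : ∃ w, w ∉ C ∧ ¬ (∀ c ∈ C, T.black.Adj w c) ∧ ¬ (∀ c ∈ C, T.White w c)
    · obtain ⟨z0, hz0, hz0B, hz0W⟩ := hEx
      rcases ztype z0 hz0 hz0B hz0W with ⟨hb0, hw0⟩ | ⟨hw0, hb0⟩
      · left
        refine ⟨?_, ?_, ?_⟩
        · intro v hv w hw hvu hwu hvw
          by_contra hnw
          exact B2 z0 hz0 hb0 hw0 v hv hvu w hw hwu hvw
            ((dichL hv hvu hw hwu hvw).resolve_right hnw)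
        · rintro z ⟨hzC, hzB, hzW⟩ v hv hvu
          rcases ztype z hzC hzB hzW with ⟨-, hw⟩ | ⟨hw, hb⟩
          · exact hw v hv hvu
          · exact (B4 z0 hz0 hb0 hw0 z hzC hw hb).elim
        · rintro z ⟨hzC, hzB, hzW⟩
          rcases ztype z hzC hzB hzW with ⟨hb, -⟩ | ⟨hw, hb⟩
          · exact hb.symm
          · exact (B4 z0 hz0 hb0 hw0 z hzC hw hb).elim
      · right
        refine ⟨?_, ?_, ?_⟩
        · intro v hv w hw hvu hwu hvw
          by_contra hnb
          exact B3 z0 hz0 hw0 hb0 v hv hvu w hw hwu hvw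
            ((dichL hv hvu hw hwu hvw).resolve_left hnb)
        · rintro z ⟨hzC, hzB, hzW⟩ v hv hvu
          rcases ztype z hzC hzB hzW with ⟨hb, hw⟩ | ⟨-, hb⟩
          · exact (B4 z hzC hb hw z0 hz0 hw0 hb0).elim
          · exact hb v hv hvu
        · rintro z ⟨hzC, hzB, hzW⟩
          rcases ztype z hzC hzB hzW with ⟨hb, hw⟩ | ⟨hw, -⟩
          · exact (B4 z hzC hb hw z0 hz0 hw0 hb0).elim
          · exact white_symm_aux T hw
    · push_neg at hEx
      rcases leafU with hwhite | hblack
      · left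
        refine ⟨hwhite, ?_, ?_⟩ <;> rintro z ⟨hzC, hzB, hzW⟩ <;>
          (push_neg at hzB; exact (hzW (hEx z hzC hzB)).elim)
      · right
        refine ⟨hblack, ?_, ?_⟩ <;> rintro z ⟨hzC, hzB, hzW⟩ <;>
          (push_neg at hzB; exact (hzW (hEx z hzC hzB)).elim)
end

section
/- Let T be a P_4-induced-saturated trigraph and let {v_1, v_2, v_3} be a gray triangle in T (all three edges v_1v_2, v_1v_3, v_2v_3 are gray). Then V(T) − {v_1, v_2, v_3} can be partitioned into sets X and Y such that for every x ∈ X the edges xv_1, xv_2, xv_3 are all black, and for every y ∈ Y the edges yv_1, yv_2, yv_3 are all white. -/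
open SimpleGraph

namespace Trigraph

variable {V : Type*} {W : Type*}

lemma single_adj_s12 (u v x y : V) :
    (single u v).Adj x y ↔ ((x = u ∧ y = v) ∨ (x = v ∧ y = u)) ∧ x ≠ y := by
  simp only [single, SimpleGraph.fromEdgeSet_adj, Set.mem_singleton_iff, Sym2.eq_iff]

lemma epath (T : Trigraph V)
    (hT : ∀ R : SimpleGraph V, T.IsRealization R → ¬ HasInducedCopy (SimpleGraph.pathGraph 4) R)
    (a b c d : V)
    (hab : a ≠ b) (hac : a ≠ c) (had : a ≠ d) (hbc : b ≠ c) (hbd : b ≠ d) (hcd : c ≠ d)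
    (h1 : T.black.Adj a b ∨ T.gray.Adj a b)
    (h2 : T.black.Adj b c ∨ T.gray.Adj b c)
    (h3 : T.black.Adj c d ∨ T.gray.Adj c d)
    (n1 : ¬ T.black.Adj a c) (n2 : ¬ T.black.Adj a d) (n3 : ¬ T.black.Adj b d) : False := by
  have hsle : ∀ u v : V, (T.black.Adj u v ∨ T.gray.Adj u v) →
      single u v ≤ T.black ⊔ T.gray := by
    intro u v huv x y h
    rw [single_adj_s12] at h
    rcases h.1 with ⟨rfl, rfl⟩ | ⟨rfl, rfl⟩
    · exact (SimpleGraph.sup_adj _ _ _ _).mpr huv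
    · exact (SimpleGraph.sup_adj _ _ _ _).mpr (huv.imp Adj.symm Adj.symm)
  have hreal : T.IsRealization (T.black ⊔ (single a b ⊔ single b c ⊔ single c d)) :=
    ⟨le_sup_left, sup_le le_sup_left
      (sup_le (sup_le (hsle a b h1) (hsle b c h2)) (hsle c d h3))⟩
  apply hT _ hreal
  have hR : ∀ x y, (T.black ⊔ (single a b ⊔ single b c ⊔ single c d)).Adj x y ↔
      (T.black.Adj x y ∨
      (x = a ∧ y = b) ∨ (x = b ∧ y = a) ∨ (x = b ∧ y = c) ∨ (x = c ∧ y = b) ∨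
      (x = c ∧ y = d) ∨ (x = d ∧ y = c)) := by
    intro x y
    simp only [SimpleGraph.sup_adj, single_adj_s12]
    constructor
    · rintro (h | (⟨⟨rfl, rfl⟩ | ⟨rfl, rfl⟩, -⟩ | ⟨⟨rfl, rfl⟩ | ⟨rfl, rfl⟩, -⟩) |
        ⟨⟨rfl, rfl⟩ | ⟨rfl, rfl⟩, -⟩)
      · exact Or.inl h
      · exact Or.inr (Or.inl ⟨rfl, rfl⟩)
      · exact Or.inr (Or.inr (Or.inl ⟨rfl, rfl⟩))
      · exact Or.inr (Or.inr (Or.inr (Or.inl ⟨rfl, rfl⟩)))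
      · exact Or.inr (Or.inr (Or.inr (Or.inr (Or.inl ⟨rfl, rfl⟩))))
      · exact Or.inr (Or.inr (Or.inr (Or.inr (Or.inr (Or.inl ⟨rfl, rfl⟩)))))
      · exact Or.inr (Or.inr (Or.inr (Or.inr (Or.inr (Or.inr ⟨rfl, rfl⟩)))))
    · rintro (h | ⟨rfl, rfl⟩ | ⟨rfl, rfl⟩ | ⟨rfl, rfl⟩ | ⟨rfl, rfl⟩ | ⟨rfl, rfl⟩ | ⟨rfl, rfl⟩)
      · exact Or.inl h
      · exact Or.inr (Or.inl (Or.inl ⟨Or.inl ⟨rfl, rfl⟩, hab⟩))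
      · exact Or.inr (Or.inl (Or.inl ⟨Or.inr ⟨rfl, rfl⟩, hab.symm⟩))
      · exact Or.inr (Or.inl (Or.inr ⟨Or.inl ⟨rfl, rfl⟩, hbc⟩))
      · exact Or.inr (Or.inl (Or.inr ⟨Or.inr ⟨rfl, rfl⟩, hbc.symm⟩))
      · exact Or.inr (Or.inr ⟨Or.inl ⟨rfl, rfl⟩, hcd⟩)
      · exact Or.inr (Or.inr ⟨Or.inr ⟨rfl, rfl⟩, hcd.symm⟩)
  have n1' : ¬ T.black.Adj c a := fun h => n1 h.symm
  have n2' : ¬ T.black.Adj d a := fun h => n2 h.symm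
  have n3' : ¬ T.black.Adj d b := fun h => n3 h.symm
  have finj : Function.Injective ![a, b, c, d] := by
    intro i j
    fin_cases i <;> fin_cases j <;>
      simp_all [hab, hac, had, hbc, hbd, hcd, hab.symm, hac.symm, had.symm, hbc.symm,
        hbd.symm, hcd.symm]
  refine ⟨⟨⟨![a, b, c, d], finj⟩, ?_⟩⟩
  intro i j
  fin_cases i <;> fin_cases j <;>
    simp [hR, pathGraph_adj, hab, hac, had, hbc, hbd, hcd, hab.symm, hac.symm, had.symm,
      hbc.symm, hbd.symm, hcd.symm, n1, n2, n3, n1', n2', n3', SimpleGraph.irrefl] <;> decide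

lemma one_present (T : Trigraph V)
    (hT : ∀ R : SimpleGraph V, T.IsRealization R → ¬ HasInducedCopy (SimpleGraph.pathGraph 4) R)
    (u w₁ w₂ w₃ : V) (g12 : T.gray.Adj w₁ w₂) (g13 : T.gray.Adj w₁ w₃)
    (g23 : T.gray.Adj w₂ w₃) (hu1 : u ≠ w₁) (hu2 : u ≠ w₂) (hu3 : u ≠ w₃)
    (hP : T.black.Adj u w₁ ∨ T.gray.Adj u w₁)
    (hA2 : ¬ T.black.Adj u w₂) (hA3 : ¬ T.black.Adj u w₃) : False :=
  epath T hT u w₁ w₂ w₃ hu1 hu2 hu3 g12.ne g13.ne g23.ne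
    hP (Or.inr g12) (Or.inr g23) hA2 hA3 (fun h => T.disjoint w₁ w₃ ⟨h, g13⟩)

lemma two_present (T : Trigraph V)
    (hT : ∀ R : SimpleGraph V, T.IsRealization R → ¬ HasInducedCopy (SimpleGraph.pathGraph 4) R)
    (u w₁ w₂ w₃ : V) (g12 : T.gray.Adj w₁ w₂) (g13 : T.gray.Adj w₁ w₃)
    (g23 : T.gray.Adj w₂ w₃) (hu1 : u ≠ w₁) (hu2 : u ≠ w₂) (hu3 : u ≠ w₃)
    (hP1 : T.black.Adj u w₁ ∨ T.gray.Adj u w₁)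
    (hP2 : T.black.Adj u w₂ ∨ T.gray.Adj u w₂)
    (hA3 : ¬ T.black.Adj u w₃) : False :=
  epath T hT w₃ w₁ u w₂ g13.ne' (Ne.symm hu3) g23.ne' (Ne.symm hu1) g12.ne hu2
    (Or.inr g13.symm) (hP1.imp Adj.symm Adj.symm) hP2
    (fun h => hA3 h.symm) (fun h => T.disjoint w₃ w₂ ⟨h, g23.symm⟩)
    (fun h => T.disjoint w₁ w₂ ⟨h, g12⟩)

lemma key (T : Trigraph V)
    (hT : ∀ R : SimpleGraph V, T.IsRealization R → ¬ HasInducedCopy (SimpleGraph.pathGraph 4) R)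
    (v₁ v₂ v₃ : V) (h12 : T.gray.Adj v₁ v₂) (h13 : T.gray.Adj v₁ v₃)
    (h23 : T.gray.Adj v₂ v₃) (u : V) (hu1 : u ≠ v₁) (hu2 : u ≠ v₂) (hu3 : u ≠ v₃)
    (hnb : ¬ (T.black.Adj u v₁ ∧ T.black.Adj u v₂ ∧ T.black.Adj u v₃)) :
    (¬ T.black.Adj u v₁ ∧ ¬ T.gray.Adj u v₁) ∧
    (¬ T.black.Adj u v₂ ∧ ¬ T.gray.Adj u v₂) ∧
    (¬ T.black.Adj u v₃ ∧ ¬ T.gray.Adj u v₃) := by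
  by_cases hB1 : T.black.Adj u v₁ <;> by_cases hB2 : T.black.Adj u v₂ <;>
    by_cases hB3 : T.black.Adj u v₃
  · exact absurd ⟨hB1, hB2, hB3⟩ hnb
  · exact absurd (two_present T hT u v₁ v₂ v₃ h12 h13 h23 hu1 hu2 hu3
      (Or.inl hB1) (Or.inl hB2) hB3) not_false
  · exact absurd (two_present T hT u v₁ v₃ v₂ h13 h12 h23.symm hu1 hu3 hu2
      (Or.inl hB1) (Or.inl hB3) hB2) not_false
  · exact absurd (one_present T hT u v₁ v₂ v₃ h12 h13 h23 hu1 hu2 hu3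
      (Or.inl hB1) hB2 hB3) not_false
  · exact absurd (two_present T hT u v₂ v₃ v₁ h23 h12.symm h13.symm hu2 hu3 hu1
      (Or.inl hB2) (Or.inl hB3) hB1) not_false
  · exact absurd (one_present T hT u v₂ v₁ v₃ h12.symm h23 h13 hu2 hu1 hu3
      (Or.inl hB2) hB1 hB3) not_false
  · exact absurd (one_present T hT u v₃ v₁ v₂ h13.symm h23.symm h12 hu3 hu1 hu2
      (Or.inl hB3) hB1 hB2) not_false
  · have hG1 : ¬ T.gray.Adj u v₁ := fun g =>
      one_present T hT u v₁ v₂ v₃ h12 h13 h23 hu1 hu2 hu3 (Or.inr g) hB2 hB3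
    have hG2 : ¬ T.gray.Adj u v₂ := fun g =>
      one_present T hT u v₂ v₁ v₃ h12.symm h23 h13 hu2 hu1 hu3 (Or.inr g) hB1 hB3
    have hG3 : ¬ T.gray.Adj u v₃ := fun g =>
      one_present T hT u v₃ v₁ v₂ h13.symm h23.symm h12 hu3 hu1 hu2 (Or.inr g) hB1 hB2
    exact ⟨⟨hB1, hG1⟩, ⟨hB2, hG2⟩, ⟨hB3, hG3⟩⟩

end Trigraph

/-- If `{v₁, v₂, v₃}` is a gray triangle in a `P_4`-induced-saturated
trigraph `T`, then the remaining vertices can be partitioned into `X` and `Y` so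
that every vertex of `X` is joined to `v₁, v₂, v₃` by black edges and every vertex
of `Y` is joined to `v₁, v₂, v₃` by white edges. -/
theorem gray_triangle_partition {V : Type*} (T : Trigraph V)
    (hT : Trigraph.IsIndSat (SimpleGraph.pathGraph 4) T)
    (v₁ v₂ v₃ : V) (h12 : T.gray.Adj v₁ v₂) (h13 : T.gray.Adj v₁ v₃)
    (h23 : T.gray.Adj v₂ v₃) :
    ∃ X Y : Set V,
      X ∪ Y = ({v₁, v₂, v₃} : Set V)ᶜ ∧ Disjoint X Y ∧
      (∀ x ∈ X, T.black.Adj x v₁ ∧ T.black.Adj x v₂ ∧ T.black.Adj x v₃) ∧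
      (∀ y ∈ Y, T.White y v₁ ∧ T.White y v₂ ∧ T.White y v₃) := by
  obtain ⟨hT1, -⟩ := hT
  refine ⟨({v₁, v₂, v₃} : Set V)ᶜ ∩
      {x | T.black.Adj x v₁ ∧ T.black.Adj x v₂ ∧ T.black.Adj x v₃},
    ({v₁, v₂, v₃} : Set V)ᶜ ∩
      {x | T.black.Adj x v₁ ∧ T.black.Adj x v₂ ∧ T.black.Adj x v₃}ᶜ, ?_, ?_, ?_, ?_⟩
  · exact Set.inter_union_compl _ _
  · exact Set.disjoint_left.mpr (fun x hx hx' => hx'.2 hx.2)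
  · exact fun x hx => hx.2
  · rintro y ⟨hy, hy'⟩
    simp only [Set.mem_compl_iff, Set.mem_insert_iff, Set.mem_singleton_iff, not_or] at hy
    obtain ⟨hy1, hy2, hy3⟩ := hy
    obtain ⟨w1, w2, w3⟩ := Trigraph.key T hT1 v₁ v₂ v₃ h12 h13 h23 y hy1 hy2 hy3 hy'
    exact ⟨⟨hy1, w1.1, w1.2⟩, ⟨hy2, w2.1, w2.2⟩, ⟨hy3, w3.1, w3.2⟩⟩
end

section
/- Every P_4-induced-saturated trigraph on at least 2 vertices has at least one gray edge. -/
open SimpleGraph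

section Aux
variable {V : Type*}
def P4pat (G : SimpleGraph V) (a b c d : V) : Prop :=
  G.Adj a b ∧ G.Adj b c ∧ G.Adj c d ∧ ¬G.Adj a c ∧ ¬G.Adj a d ∧ ¬G.Adj b d

def P4free (G : SimpleGraph V) : Prop := ∀ a b c d, ¬ P4pat G a b c d

lemma P4pat.ne {G : SimpleGraph V} {a b c d : V} (h : P4pat G a b c d) :
    a ≠ b ∧ a ≠ c ∧ a ≠ d ∧ b ≠ c ∧ b ≠ d ∧ c ≠ d := by
  obtain ⟨h1, h2, h3, n1, n2, n3⟩ := h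
  refine ⟨h1.ne, ?_, ?_, h2.ne, ?_, h3.ne⟩
  · rintro rfl; exact n2 h3
  · rintro rfl; exact n1 h3.symm
  · rintro rfl; exact n2 h1

lemma P4free_compl {G : SimpleGraph V} (h : P4free G) : P4free Gᶜ := by
  rintro a b c d hp
  obtain ⟨hab, hac, had, hbc, hbd, hcd⟩ := hp.ne
  obtain ⟨h1, h2, h3, n1, n2, n3⟩ := hp
  rw [compl_adj] at h1 h2 h3
  rw [compl_adj] at n1 n2 n3
  push_neg at n1 n2 n3
  exact h c a d b ⟨(n1 hac).symm, n2 had, (n3 hbd).symm, h3.2,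
    fun e => h2.2 e.symm, h1.2⟩

lemma reach_prop {H : SimpleGraph V} {P : V → Prop} (hP : ∀ a b, H.Adj a b → P b) :
    ∀ {a b : V}, H.Reachable a b → P a → P b := by
  intro a b h
  obtain ⟨w⟩ := h
  induction w with
  | nil => exact id
  | cons h w ih => exact fun _ => ih (hP _ _ h)

lemma reach_exists_adj {H : SimpleGraph V} {a b : V} (h : H.Reachable a b) (hne : a ≠ b) :
    ∃ z, H.Adj a z := by
  obtain ⟨w⟩ := h
  cases w with
  | nil => exact absurd rfl hne
  | cons h _ => exact ⟨_, h⟩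

lemma isolated_not_reach {H : SimpleGraph V} {x y : V} (hiso : ∀ z, ¬H.Adj x z)
    (hne : x ≠ y) : ¬H.Reachable x y := fun h => by
  obtain ⟨z, hz⟩ := reach_exists_adj h hne
  exact hiso z hz

lemma step_lemma {H : SimpleGraph V} :
    ∀ {a x : V}, H.Walk a x → ¬H.Adj a x → a ≠ x →
      ∃ p q, p ≠ x ∧ H.Adj p q ∧ H.Adj q x ∧ ¬H.Adj p x := by
  intro a x w
  induction w with
  | nil => exact fun _ h => absurd rfl h
  | @cons a b x h w ih =>
    intro hna hax
    by_cases hbx : b = x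
    · exact absurd (hbx ▸ h) hna
    · by_cases hAdj : H.Adj b x
      · exact ⟨a, b, hax, h, hAdj, hna⟩
      · exact ih hAdj hbx

lemma exit_lemma {H : SimpleGraph V} {B : V → Prop} :
    ∀ {a x : V}, H.Walk a x → (∀ y z, B y → H.Adj y z → z = x ∨ B z) → ¬ B x → B a →
      ∃ c, B c ∧ H.Adj c x := by
  intro a x w
  induction w with
  | nil => exact fun _ hx hb => absurd hb hx
  | @cons a b x h w ih =>
    intro hcl hx hb
    rcases hcl _ _ hb h with rfl | h2
    · exact ⟨_, hb, h⟩
    · exact ih hcl hx h2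

def Gr (G : SimpleGraph V) (s : Finset V) : SimpleGraph V where
  Adj u v := G.Adj u v ∧ u ∈ s ∧ v ∈ s
  symm := ⟨fun u v ⟨h, hu, hv⟩ => ⟨h.symm, hv, hu⟩⟩
  loopless := ⟨fun u ⟨h, _⟩ => G.loopless.irrefl u h⟩

lemma Gr_adj {G : SimpleGraph V} {s : Finset V} {u v : V} :
    (Gr G s).Adj u v ↔ G.Adj u v ∧ u ∈ s ∧ v ∈ s := Iff.rfl

def Disc (G : SimpleGraph V) (s : Finset V) : Prop :=
  ∃ a ∈ s, ∃ b ∈ s, a ≠ b ∧ ¬ (Gr G s).Reachable a b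

lemma keyStep [DecidableEq V] {G : SimpleGraph V} (hG : P4free G) {s : Finset V} {x a b : V}
    (hx : x ∈ s) (ha : a ∈ s.erase x) (hb : b ∈ s.erase x) (hab : a ≠ b)
    (hnr : ¬ (Gr G (s.erase x)).Reachable a b) : Disc G s ∨ Disc Gᶜ s := by
  by_cases hd : Disc G s
  · exact Or.inl hd
  right
  rw [Disc] at hd
  push_neg at hd
  -- hd : ∀ a ∈ s, ∀ b ∈ s, a ≠ b → Reachable
  have hmem : ∀ y z : V, (Gr G (s.erase x)).Adj y z → z ∈ s.erase x := fun y z h => h.2.2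
  -- main claim : x is adjacent (in G) to everything else in s
  have hdom : ∀ z ∈ s.erase x, G.Adj x z := by
    intro a' ha'
    by_contra hna
    have ha's : a' ∈ s := Finset.mem_of_mem_erase ha'
    have ha'x : a' ≠ x := Finset.ne_of_mem_erase ha'
    have hreach : (Gr G s).Reachable a' x := hd a' ha's x hx ha'x
    obtain ⟨w⟩ := hreach
    obtain ⟨p, q, hpx, hpq, hqx, hnpx⟩ :=
      step_lemma w (fun h => hna h.1.symm) ha'x
    have hps : p ∈ s := hpq.2.1
    have hqs : q ∈ s := hpq.2.2
    have hqxne : q ≠ x := hqx.1.ne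
    have hpe : p ∈ s.erase x := Finset.mem_erase.2 ⟨hpx, hps⟩
    have hqe : q ∈ s.erase x := Finset.mem_erase.2 ⟨hqxne, hqs⟩
    have hGnpx : ¬ G.Adj p x := fun h => hnpx ⟨h, hps, hx⟩
    have hpq' : (Gr G (s.erase x)).Adj p q := ⟨hpq.1, hpe, hqe⟩
    -- pick t among a, b not reachable from p in the erased graph
    obtain ⟨t, hte, hnpt⟩ :
        ∃ t, t ∈ s.erase x ∧ ¬ (Gr G (s.erase x)).Reachable p t := by
      by_cases hpa : (Gr G (s.erase x)).Reachable p a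
      · exact ⟨b, hb, fun h => hnr (hpa.symm.trans h)⟩
      · exact ⟨a, ha, hpa⟩
    have hnqt : ¬ (Gr G (s.erase x)).Reachable q t := fun h =>
      hnpt (hpq'.reachable.trans h)
    set B : V → Prop := fun y => (Gr G (s.erase x)).Reachable t y with hB
    have hBmem : ∀ y, B y → y ∈ s.erase x := by
      intro y hy
      exact reach_prop (fun a b h => hmem a b h) hy hte
    have hBx : ¬ B x := fun h => Finset.notMem_erase x s (hBmem x h)
    have hcl : ∀ y z, B y → (Gr G s).Adj y z → z = x ∨ B z := by
      intro y z hy hyz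
      by_cases hzx : z = x
      · exact Or.inl hzx
      · refine Or.inr (hy.trans ?_)
        exact SimpleGraph.Adj.reachable ⟨hyz.1, hBmem y hy, Finset.mem_erase.2 ⟨hzx, hyz.2.2⟩⟩
    have hts : t ∈ s := Finset.mem_of_mem_erase hte
    have htx : t ≠ x := Finset.ne_of_mem_erase hte
    obtain ⟨w2⟩ := hd t hts x hx htx
    obtain ⟨c, hBc, hcx⟩ := exit_lemma w2 hcl hBx (SimpleGraph.Reachable.refl t)
    have hce : c ∈ s.erase x := hBmem c hBc
    have hGcx : G.Adj c x := hcx.1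
    have hnpc : ¬ G.Adj p c := fun h =>
      hnpt ((hBc.trans (SimpleGraph.Adj.reachable ⟨h.symm, hce, hpe⟩)).symm)
    have hnqc : ¬ G.Adj q c := fun h =>
      hnqt ((hBc.trans (SimpleGraph.Adj.reachable ⟨h.symm, hce, hqe⟩)).symm)
    exact hG p q x c ⟨hpq.1, hqx.1, hGcx.symm, hGnpx, hnpc, hnqc⟩
  -- now x is isolated in Gr Gᶜ s
  have hiso : ∀ z, ¬ (Gr Gᶜ s).Adj x z := by
    rintro z ⟨hzadj, _, hzs⟩
    exact hzadj.2 (hdom z (Finset.mem_erase.2 ⟨fun h => hzadj.1 h.symm, hzs⟩))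
  exact ⟨x, hx, a, Finset.mem_of_mem_erase ha, (Finset.ne_of_mem_erase ha).symm,
    isolated_not_reach hiso (Finset.ne_of_mem_erase ha).symm⟩

lemma seinsche [DecidableEq V] :
    ∀ (s : Finset V) (G : SimpleGraph V), P4free G → 2 ≤ s.card →
      Disc G s ∨ Disc Gᶜ s := by
  intro s
  induction s using Finset.strongInduction with
  | _ s ih =>
    intro G hG hcard
    obtain ⟨x, hx, y, hy, hxy⟩ := Finset.one_lt_card.1 hcard
    by_cases h2 : s.card = 2
    · -- base case: two vertices
      have hmem2 : ∀ z ∈ s, z = x ∨ z = y := by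
        have hsub : ({x, y} : Finset V) ⊆ s := by
          intro w hw
          rcases Finset.mem_insert.1 hw with rfl | hw
          · exact hx
          · exact (Finset.mem_singleton.1 hw) ▸ hy
        have hcard2 : s.card ≤ ({x, y} : Finset V).card := by
          rw [h2, Finset.card_insert_of_notMem (by simpa using hxy),
            Finset.card_singleton]
        have heq := Finset.eq_of_subset_of_card_le hsub hcard2
        intro z hz
        have : z ∈ ({x, y} : Finset V) := heq ▸ hz
        rcases Finset.mem_insert.1 this with h | h
        · exact Or.inl h
        · exact Or.inr (Finset.mem_singleton.1 h)
      by_cases hadj : G.Adj x y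
      · right
        have hiso : ∀ z, ¬ (Gr Gᶜ s).Adj x z := by
          rintro z ⟨hzadj, _, hzs⟩
          rcases hmem2 z hzs with rfl | rfl
          · exact (Gᶜ.ne_of_adj hzadj) rfl
          · exact hzadj.2 hadj
        exact ⟨x, hx, y, hy, hxy, isolated_not_reach hiso hxy⟩
      · left
        have hiso : ∀ z, ¬ (Gr G s).Adj x z := by
          rintro z ⟨hzadj, _, hzs⟩
          rcases hmem2 z hzs with rfl | rfl
          · exact (G.ne_of_adj hzadj) rfl
          · exact hadj hzadj
        exact ⟨x, hx, y, hy, hxy, isolated_not_reach hiso hxy⟩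
    · -- inductive case
      have h3 : 3 ≤ s.card := by omega
      have hsub : s.erase x ⊂ s := Finset.erase_ssubset hx
      have hcard' : 2 ≤ (s.erase x).card := by
        rw [Finset.card_erase_of_mem hx]; omega
      rcases ih (s.erase x) hsub G hG hcard' with hdisc | hdisc
      · obtain ⟨a, haa, b, hbb, hab, hnr⟩ := hdisc
        exact keyStep hG hx haa hbb hab hnr
      · obtain ⟨a, haa, b, hbb, hab, hnr⟩ := hdisc
        have := keyStep (P4free_compl hG) hx haa hbb hab hnr
        rw [compl_compl] at this
        exact this.symm

def Twins (G : SimpleGraph V) (s : Finset V) : Prop :=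
  ∃ u ∈ s, ∃ v ∈ s, u ≠ v ∧ ∀ w ∈ s, w ≠ u → w ≠ v → (G.Adj u w ↔ G.Adj v w)

lemma twins_compl {G : SimpleGraph V} {s : Finset V} (h : Twins Gᶜ s) : Twins G s := by
  obtain ⟨u, hu, v, hv, huv, hw⟩ := h
  refine ⟨u, hu, v, hv, huv, fun w hws hwu hwv => ?_⟩
  have := hw w hws hwu hwv
  rw [compl_adj, compl_adj] at this
  constructor
  · intro h
    by_contra hn
    exact (this.2 ⟨(Ne.symm hwv), hn⟩).2 h
  · intro h
    by_contra hn
    exact (this.1 ⟨(Ne.symm hwu), hn⟩).2 h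

lemma twin_aux [DecidableEq V] {G : SimpleGraph V} {s : Finset V}
    (ih : ∀ t ⊂ s, ∀ G' : SimpleGraph V, P4free G' → 2 ≤ t.card → Twins G' t)
    (hG : P4free G) {a b : V} (ha : a ∈ s) (hb : b ∈ s) (hab : a ≠ b)
    (hnr : ¬ (Gr G s).Reachable a b) : Twins G s := by
  classical
  -- from a reachability class C that is big enough, get twins on s
  have extend : ∀ (z : V), ∀ (C : Finset V),
      C = s.filter (fun y => (Gr G s).Reachable z y) → 2 ≤ C.card → C ⊂ s →
      Twins G s := by
    intro z C hC hcard hCs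
    have hclC : ∀ u w, u ∈ C → G.Adj u w → w ∈ s → w ∈ C := by
      intro u w hu huw hws
      rw [hC, Finset.mem_filter] at hu ⊢
      exact ⟨hws, hu.2.trans (SimpleGraph.Adj.reachable ⟨huw, hu.1, hws⟩)⟩
    obtain ⟨u, huC, v, hvC, huv, htw⟩ := ih C hCs G hG hcard
    refine ⟨u, hCs.1 huC, v, hCs.1 hvC, huv, fun w hws hwu hwv => ?_⟩
    by_cases hwC : w ∈ C
    · exact htw w hwC hwu hwv
    · constructor
      · intro h; exact absurd (hclC u w huC h hws) hwC
      · intro h; exact absurd (hclC v w hvC h hws) hwC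
  set A : Finset V := s.filter (fun y => (Gr G s).Reachable a y) with hA
  set B : Finset V := s.filter (fun y => (Gr G s).Reachable b y) with hBdef
  have haA : a ∈ A := Finset.mem_filter.2 ⟨ha, SimpleGraph.Reachable.refl a⟩
  have hbB : b ∈ B := Finset.mem_filter.2 ⟨hb, SimpleGraph.Reachable.refl b⟩
  have hbA : b ∉ A := fun h => hnr (Finset.mem_filter.1 h).2
  have haB : a ∉ B := fun h => hnr ((Finset.mem_filter.1 h).2).symm
  have hAs : A ⊂ s := ⟨Finset.filter_subset _ _, fun h => hbA (h hb)⟩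
  have hBs : B ⊂ s := ⟨Finset.filter_subset _ _, fun h => haB (h ha)⟩
  by_cases hAc : 2 ≤ A.card
  · exact extend a A hA hAc hAs
  · by_cases hBc : 2 ≤ B.card
    · exact extend b B hBdef hBc hBs
    · -- both a and b are isolated in s
      have hAone : A = {a} := by
        have : A.card = 1 := by
          have := Finset.card_pos.2 ⟨a, haA⟩; omega
        obtain ⟨w, hw⟩ := Finset.card_eq_one.1 this
        rw [hw] at haA ⊢
        rw [Finset.mem_singleton] at haA
        rw [haA]
      have hBone : B = {b} := by
        have : B.card = 1 := by
          have := Finset.card_pos.2 ⟨b, hbB⟩; omega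
        obtain ⟨w, hw⟩ := Finset.card_eq_one.1 this
        rw [hw] at hbB ⊢
        rw [Finset.mem_singleton] at hbB
        rw [hbB]
      have hisoa : ∀ w ∈ s, ¬ G.Adj a w := by
        intro w hws h
        have : w ∈ A := Finset.mem_filter.2
          ⟨hws, SimpleGraph.Adj.reachable ⟨h, ha, hws⟩⟩
        rw [hAone, Finset.mem_singleton] at this
        exact G.loopless.irrefl a (this ▸ h)
      have hisob : ∀ w ∈ s, ¬ G.Adj b w := by
        intro w hws h
        have : w ∈ B := Finset.mem_filter.2
          ⟨hws, SimpleGraph.Adj.reachable ⟨h, hb, hws⟩⟩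
        rw [hBone, Finset.mem_singleton] at this
        exact G.loopless.irrefl b (this ▸ h)
      exact ⟨a, ha, b, hb, hab, fun w hws _ _ =>
        iff_of_false (hisoa w hws) (hisob w hws)⟩

lemma twin [DecidableEq V] :
    ∀ (s : Finset V) (G : SimpleGraph V), P4free G → 2 ≤ s.card → Twins G s := by
  intro s
  induction s using Finset.strongInduction with
  | _ s ih =>
    intro G hG hcard
    rcases seinsche s G hG hcard with hdisc | hdisc
    · obtain ⟨a, ha, b, hb, hab, hnr⟩ := hdisc
      exact twin_aux (fun t ht G' hG' hc => ih t ht G' hG' hc) hG ha hb hab hnr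
    · obtain ⟨a, ha, b, hb, hab, hnr⟩ := hdisc
      exact twins_compl
        (twin_aux (fun t ht G' hG' hc => ih t ht G' hG' hc) (P4free_compl hG) ha hb hab hnr)

lemma P4pat.ne' {G : SimpleGraph V} {a b c d : V} (h : P4pat G a b c d) :
    a ≠ b ∧ a ≠ c ∧ a ≠ d ∧ b ≠ c ∧ b ≠ d ∧ c ≠ d := by
  obtain ⟨h1, h2, h3, n1, n2, n3⟩ := h
  refine ⟨h1.ne, ?_, ?_, h2.ne, ?_, h3.ne⟩
  · rintro rfl; exact n2 h3
  · rintro rfl; exact n1 h3.symm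
  · rintro rfl; exact n2 h1

lemma path4_adj : ∀ i j : Fin 4, (pathGraph 4).Adj i j ↔
    ((i.val + 1 = j.val) ∨ (j.val + 1 = i.val)) := fun i j => pathGraph_adj

lemma pat_to_copy {G : SimpleGraph V} {a b c d : V} (h : P4pat G a b c d) :
    Nonempty (pathGraph 4 ↪g G) := by
  obtain ⟨hab, hac, had, hbc, hbd, hcd⟩ := h.ne'
  obtain ⟨h1, h2, h3, n1, n2, n3⟩ := h
  refine ⟨⟨⟨![a, b, c, d], ?_⟩, ?_⟩⟩
  · intro i j hij
    fin_cases i <;> fin_cases j <;>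
      simp only [Matrix.cons_val_zero, Matrix.cons_val_one, Matrix.head_cons,
        Matrix.cons_val_two, Matrix.tail_cons, Matrix.cons_val_three, Fin.isValue] at hij <;>
      first | rfl | (exfalso; simp_all)
  · intro i j
    fin_cases i <;> fin_cases j <;>
      simp only [pathGraph_adj, Matrix.cons_val_zero, Matrix.cons_val_one, Matrix.head_cons,
        Matrix.cons_val_two, Matrix.tail_cons, Matrix.cons_val_three, Fin.isValue] <;>
      norm_num <;>
      first
        | exact h1 | exact h1.symm | exact h2 | exact h2.symm | exact h3 | exact h3.symm
        | exact n1 | exact (fun x => n1 x.symm) | exact n2 | exact (fun x => n2 x.symm)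
        | exact n3 | exact (fun x => n3 x.symm) | exact G.loopless _ | simp_all

lemma p4_no_twins : ∀ i j : Fin 4, i ≠ j → ∃ k : Fin 4, k ≠ i ∧ k ≠ j ∧
    ¬((pathGraph 4).Adj i k ↔ (pathGraph 4).Adj j k) := by
  have : ∀ i j : Fin 4, i ≠ j → ∃ k : Fin 4, k ≠ i ∧ k ≠ j ∧
      ¬(((i.val + 1 = k.val) ∨ (k.val + 1 = i.val)) ↔
        ((j.val + 1 = k.val) ∨ (k.val + 1 = j.val))) := by decide
  intro i j hij
  obtain ⟨k, h1, h2, h3⟩ := this i j hij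
  exact ⟨k, h1, h2, by rw [path4_adj, path4_adj]; exact h3⟩

lemma path4_pat : P4pat (pathGraph 4) 0 1 2 3 := by
  simp only [P4pat, path4_adj]
  decide

end Aux

/-- Every `P_4`-induced-saturated trigraph on at least `2` vertices
has a gray edge. -/
theorem exists_gray_edge {n : ℕ} (hn : 2 ≤ n) (T : Trigraph (Fin n))
    (hT : Trigraph.IsIndSat (SimpleGraph.pathGraph 4) T) :
    ∃ u v : Fin n, T.gray.Adj u v := by
  classical
  by_contra hng
  push_neg at hng
  set G := T.black with hGdef
  have hreal : T.IsRealization G := ⟨le_refl _, le_sup_left⟩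
  have hfree : P4free G := fun a b c d hp => hT.1 G hreal (pat_to_copy hp)
  have h2 : 2 ≤ (Finset.univ : Finset (Fin n)).card := by
    rw [Finset.card_univ, Fintype.card_fin]; exact hn
  obtain ⟨u, -, v, -, huv, htw⟩ := twin Finset.univ G hfree h2
  have htw' : ∀ w, w ≠ u → w ≠ v → (G.Adj u w ↔ G.Adj v w) :=
    fun w => htw w (Finset.mem_univ w)
  obtain ⟨R, hR, ⟨g⟩⟩ := hT.2 u v huv (hng u v)
  have agree : ∀ a b : Fin n, s(a, b) ≠ s(u, v) → (R.Adj a b ↔ G.Adj a b) := by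
    intro a b hne
    obtain ⟨hlo, hhi⟩ := hR
    constructor
    · intro h
      have h3 := hhi h
      simp only [Trigraph.flip, SimpleGraph.sup_adj, SimpleGraph.sdiff_adj] at h3
      rcases h3 with ⟨hb, -⟩ | (hg | hs)
      · exact hb
      · exact absurd hg (hng a b)
      · rw [Trigraph.single, SimpleGraph.fromEdgeSet_adj] at hs
        exact absurd (Set.mem_singleton_iff.1 hs.1) hne
    · intro h
      apply hlo
      show (T.black \ Trigraph.single u v).Adj a b
      rw [SimpleGraph.sdiff_adj]
      refine ⟨h, ?_⟩
      rw [Trigraph.single, SimpleGraph.fromEdgeSet_adj]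
      rintro ⟨hmem, -⟩
      exact hne (Set.mem_singleton_iff.1 hmem)
  by_cases hcase : (∃ i, g i = u) ∧ (∃ j, g j = v)
  · obtain ⟨⟨i, hi⟩, ⟨j, hj⟩⟩ := hcase
    have hij : i ≠ j := by rintro rfl; exact huv (hi ▸ hj ▸ rfl)
    obtain ⟨k, hki, hkj, hk⟩ := p4_no_twins i j hij
    set w := g k with hw
    have hwu : w ≠ u := fun h => hki (g.injective (h.trans hi.symm))
    have hwv : w ≠ v := fun h => hkj (g.injective (h.trans hj.symm))
    have e1 : s(u, w) ≠ s(u, v) := by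
      intro heq
      rw [Sym2.eq_iff] at heq
      rcases heq with ⟨-, h⟩ | ⟨h1, h2⟩
      · exact hwv h
      · exact hwu h2
    have e2 : s(v, w) ≠ s(u, v) := by
      intro heq
      rw [Sym2.eq_iff] at heq
      rcases heq with ⟨h1, h2⟩ | ⟨-, h2⟩
      · exact hwv h2
      · exact hwu h2
    have m1 : R.Adj u w ↔ (pathGraph 4).Adj i k := by rw [← hi, hw]; exact g.map_rel_iff
    have m2 : R.Adj v w ↔ (pathGraph 4).Adj j k := by rw [← hj, hw]; exact g.map_rel_iff
    exact hk ((((m1.symm.trans (agree u w e1)).trans (htw' w hwu hwv)).trans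
      (agree v w e2).symm).trans m2)
  · have hmiss : (∀ i, g i ≠ u) ∨ (∀ j, g j ≠ v) := by
      rcases not_and_or.mp hcase with h | h
      · exact Or.inl (fun i e => h ⟨i, e⟩)
      · exact Or.inr (fun j e => h ⟨j, e⟩)
    have eAll : ∀ i j : Fin 4, s(g i, g j) ≠ s(u, v) := by
      intro i j heq
      rw [Sym2.eq_iff] at heq
      rcases hmiss with hm | hm
      · rcases heq with ⟨h1, -⟩ | ⟨-, h2⟩
        · exact hm i h1
        · exact hm j h2
      · rcases heq with ⟨-, h2⟩ | ⟨h1, -⟩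
        · exact hm j h2
        · exact hm i h1
    have gadj : ∀ i j : Fin 4, G.Adj (g i) (g j) ↔ (pathGraph 4).Adj i j := by
      intro i j
      rw [← agree _ _ (eAll i j)]
      exact g.map_rel_iff
    obtain ⟨q1, q2, q3, q4, q5, q6⟩ := path4_pat
    exact hfree (g 0) (g 1) (g 2) (g 3)
      ⟨(gadj 0 1).2 q1, (gadj 1 2).2 q2, (gadj 2 3).2 q3,
       fun h => q4 ((gadj 0 2).1 h), fun h => q5 ((gadj 0 3).1 h),
       fun h => q6 ((gadj 1 3).1 h)⟩
end
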